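/- arXiv:2402.02001 — 7 statements merged into one kernel-verified Lean document; each statement's English description precedes it below -/
import Mathlib

section
/- Let T be a finite set of pairs (x, y) ∈ A × B (a finite relation over attributes X and Y) with |T| = M ≥ 2. Then T can be partitioned into at most k := 2·⌈log₂ M⌉ sub-relations T¹, …, T^k such that for every i, |π_X(T^i)| · deg_{T^i}(Y|X) ≤ M, where π_X(T^i) is the set of x-values appearing in T^i and deg_{T^i}(Y|X) := max over x of the number of pairs in T^i with first coordinate x. -/
/-- `deg_T(Y|X)`: the maximal number of tuples of `T` sharing a first coordinate. -/
def degYX {A B : Type*} [DecidableEq A] [DecidableEq B] (T : Finset (A × B)) : ℕ :=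
  (T.image Prod.fst).sup fun x => (T.filter fun p => p.1 = x).card

theorem stmt_6 {A B : Type*} [DecidableEq A] [DecidableEq B]
    (T : Finset (A × B)) (M : ℕ) (hM : T.card = M) (hM2 : 2 ≤ M) :
    ∃ k : ℕ, k ≤ 2 * Nat.clog 2 M ∧
      ∃ P : Fin k → Finset (A × B),
        (∀ i j : Fin k, i ≠ j → Disjoint (P i) (P j)) ∧
        (∀ t : A × B, t ∈ T ↔ ∃ i : Fin k, t ∈ P i) ∧
        (∀ i : Fin k, ((P i).image Prod.fst).card * degYX (P i) ≤ M) := by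
  classical
  obtain ⟨L, hLdef⟩ : ∃ L, L = Nat.clog 2 M := ⟨_, rfl⟩
  have hL1 : 1 ≤ L := hLdef ▸ Nat.clog_pos one_lt_two hM2
  set d : A → ℕ := fun x => (T.filter fun p => p.1 = x).card with hd
  set fib : A → Finset B := fun x => (T.filter fun p => p.1 = x).image Prod.snd with hfibdef
  have hinj : ∀ x : A, Set.InjOn Prod.snd ((T.filter fun p => p.1 = x : Finset (A × B)) : Set (A × B)) := by
    intro x p hp q hq h
    simp only [Finset.coe_filter, Set.mem_setOf_eq] at hp hq
    exact Prod.ext (hp.2.trans hq.2.symm) h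
  have hfibcard : ∀ x, (fib x).card = d x := fun x => Finset.card_image_of_injOn (hinj x)
  have hHex : ∀ x, ∃ H ⊆ fib x, H.card = d x / 2 := fun x =>
    Finset.exists_subset_card_eq (by rw [hfibcard]; exact Nat.div_le_self _ _)
  choose H hHsub hHcard using hHex
  set jdx : A → ℕ := fun x => min (Nat.log 2 (d x)) (L - 1) with hjdx
  have hjlt : ∀ x, jdx x < L := fun x => lt_of_le_of_lt (min_le_right _ _) (by omega)
  have hdM : ∀ x, d x ≤ M := fun x => hM ▸ Finset.card_filter_le _ _
  have hhalf : ∀ x, d x - d x / 2 ≤ 2 ^ jdx x := by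
    intro x
    rcases le_or_gt (Nat.log 2 (d x)) (L - 1) with h | h
    · have hj : jdx x = Nat.log 2 (d x) := min_eq_left h
      have h1 := Nat.lt_pow_succ_log_self (by norm_num : 1 < 2) (d x)
      rw [pow_succ] at h1
      rw [hj]; omega
    · have hj : jdx x = L - 1 := min_eq_right h.le
      have hM2L : M ≤ 2 ^ L := hLdef ▸ Nat.le_pow_clog one_lt_two M
      have h2 : (2 : ℕ) ^ L = 2 ^ (L - 1) * 2 := by
        rw [← pow_succ]; congr 1; omega
      have := hdM x
      rw [hj]; omega
  have hdlow : ∀ x, x ∈ T.image Prod.fst → 2 ^ jdx x ≤ d x := by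
    intro x hx
    have hd1 : 1 ≤ d x := by
      simp only [Finset.mem_image] at hx
      obtain ⟨p, hp, rfl⟩ := hx
      exact Finset.card_pos.mpr ⟨p, Finset.mem_filter.mpr ⟨hp, rfl⟩⟩
    calc 2 ^ jdx x ≤ 2 ^ Nat.log 2 (d x) :=
          Nat.pow_le_pow_right (by norm_num) (min_le_left _ _)
      _ ≤ d x := Nat.pow_log_le_self 2 (by omega)
  set Bk : ℕ → Finset A := fun j => (T.image Prod.fst).filter fun x => jdx x = j with hBkdef
  have hBk : ∀ j, (Bk j).card * 2 ^ j ≤ M := by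
    intro j
    have hsum : M = ∑ x ∈ T.image Prod.fst, d x := by
      rw [← hM]; exact Finset.card_eq_sum_card_image Prod.fst T
    calc (Bk j).card * 2 ^ j = ∑ _x ∈ Bk j, 2 ^ j := by
          rw [Finset.sum_const, smul_eq_mul]
      _ ≤ ∑ x ∈ Bk j, d x := Finset.sum_le_sum (fun x hx => by
          have hx' := Finset.mem_filter.mp hx
          calc 2 ^ j = 2 ^ jdx x := by rw [hx'.2]
            _ ≤ d x := hdlow x hx'.1)
      _ ≤ ∑ x ∈ T.image Prod.fst, d x :=
          Finset.sum_le_sum_of_subset (Finset.filter_subset _ _)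
      _ = M := hsum.symm
  set Q : ℕ → ℕ → Finset (A × B) := fun j s =>
    T.filter fun p => jdx p.1 = j ∧ ((p.2 ∈ H p.1) ↔ s = 0) with hQdef
  -- degree bound for parts
  have hQdeg : ∀ j s x, (((Q j s).filter fun p => p.1 = x)).card ≤ d x - d x / 2 := by
    intro j s x
    by_cases hs : s = 0
    · -- maps into H x
      have : (((Q j s).filter fun p => p.1 = x)).card ≤ (H x).card := by
        apply Finset.card_le_card_of_injOn Prod.snd
        · intro p hp
          simp only [hQdef, Finset.mem_coe, Finset.mem_filter] at hp
          obtain ⟨⟨hpT, _, hmem⟩, hpx⟩ := hp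
          rw [← hpx]; exact (hmem.mpr hs)
        · intro p hp q hq h
          simp only [Finset.coe_filter, Set.mem_setOf_eq] at hp hq
          exact Prod.ext (hp.2.trans hq.2.symm) h
      rw [hHcard] at this
      omega
    · -- maps into fib x \ H x
      have hcard : (fib x \ H x).card = d x - d x / 2 := by
        rw [Finset.card_sdiff_of_subset (hHsub x), hfibcard, hHcard]
      have : (((Q j s).filter fun p => p.1 = x)).card ≤ (fib x \ H x).card := by
        apply Finset.card_le_card_of_injOn Prod.snd
        · intro p hp
          simp only [hQdef, Finset.mem_coe, Finset.mem_filter] at hp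
          obtain ⟨⟨hpT, _, hmem⟩, hpx⟩ := hp
          rw [Finset.mem_coe, Finset.mem_sdiff]
          constructor
          · rw [← hpx]
            exact Finset.mem_image.mpr ⟨p, Finset.mem_filter.mpr ⟨hpT, rfl⟩, rfl⟩
          · rw [← hpx]
            intro hc
            exact hs (hmem.mp hc)
        · intro p hp q hq h
          simp only [Finset.coe_filter, Set.mem_setOf_eq] at hp hq
          exact Prod.ext (hp.2.trans hq.2.symm) h
      omega
  refine ⟨2 * L, by omega, fun i => Q (i.1 % L) (i.1 / L), ?_, ?_, ?_⟩
  · -- disjointness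
    intro i i' hne
    rw [Finset.disjoint_left]
    intro p hp hp'
    simp only [hQdef, Finset.mem_filter] at hp hp'
    obtain ⟨_, hj, hm⟩ := hp
    obtain ⟨_, hj', hm'⟩ := hp'
    have hmod : i.1 % L = i'.1 % L := hj.symm.trans hj'
    have hi2 : i.1 / L < 2 := Nat.div_lt_of_lt_mul (by have := i.2; omega)
    have hi2' : i'.1 / L < 2 := Nat.div_lt_of_lt_mul (by have := i'.2; omega)
    have hdiv : i.1 / L = i'.1 / L := by
      by_cases hy : p.2 ∈ H p.1
      · rw [hm.mp hy, hm'.mp hy]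
      · have h0 : ¬ (i.1 / L = 0) := fun hc => hy (hm.mpr hc)
        have h0' : ¬ (i'.1 / L = 0) := fun hc => hy (hm'.mpr hc)
        have e1 : i.1 / L = 1 :=
          Nat.le_antisymm (Nat.lt_succ_iff.mp hi2) (Nat.pos_of_ne_zero h0)
        have e1' : i'.1 / L = 1 :=
          Nat.le_antisymm (Nat.lt_succ_iff.mp hi2') (Nat.pos_of_ne_zero h0')
        rw [e1, e1']
    exact hne (Fin.ext (by
      rw [← Nat.div_add_mod i.1 L, ← Nat.div_add_mod i'.1 L, hmod, hdiv]))
  · -- cover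
    intro t
    constructor
    · intro ht
      by_cases hy : t.2 ∈ H t.1
      · refine ⟨⟨jdx t.1, by have := hjlt t.1; omega⟩, ?_⟩
        simp only [hQdef, Finset.mem_filter]
        have hj := hjlt t.1
        refine ⟨ht, ?_, ?_⟩
        · simp [Nat.mod_eq_of_lt hj]
        · simp [Nat.div_eq_of_lt hj, hy]
      · refine ⟨⟨L + jdx t.1, by have := hjlt t.1; omega⟩, ?_⟩
        simp only [hQdef, Finset.mem_filter]
        have hj := hjlt t.1
        have hmod : (L + jdx t.1) % L = jdx t.1 := by
          rw [Nat.add_mod_left, Nat.mod_eq_of_lt hj]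
        have hdiv : (L + jdx t.1) / L = 1 := by
          rw [Nat.add_div_left _ (by omega), Nat.div_eq_of_lt hj]
        refine ⟨ht, by rw [hmod], by rw [hdiv]; simp [hy]⟩
    · rintro ⟨i, hi⟩
      simp only [hQdef, Finset.mem_filter] at hi
      exact hi.1
  · -- size bound
    intro i
    set j := i.1 % L with hj
    set s := i.1 / L with hs
    have hsub : (Q j s).image Prod.fst ⊆ Bk j := by
      intro x hx
      simp only [Finset.mem_image, hQdef, Finset.mem_filter] at hx
      obtain ⟨p, ⟨hpT, hpj, _⟩, rfl⟩ := hx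
      exact Finset.mem_filter.mpr ⟨Finset.mem_image.mpr ⟨p, hpT, rfl⟩, hpj⟩
    have hdeg : degYX (Q j s) ≤ 2 ^ j := by
      apply Finset.sup_le
      intro x hx
      have hxj : jdx x = j := by
        simp only [Finset.mem_image, hQdef, Finset.mem_filter] at hx
        obtain ⟨p, ⟨_, hpj, _⟩, rfl⟩ := hx
        exact hpj
      calc ((Q j s).filter fun p => p.1 = x).card ≤ d x - d x / 2 := hQdeg j s x
        _ ≤ 2 ^ jdx x := hhalf x
        _ = 2 ^ j := by rw [hxj]
    calc ((Q j s).image Prod.fst).card * degYX (Q j s)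
        ≤ (Bk j).card * 2 ^ j := Nat.mul_le_mul (Finset.card_le_card hsub) hdeg
      _ ≤ M := hBk j
end

section
/- Let V be a finite set, 𝒵 a nonempty finite family of subsets of V, Δ a finite index set of pairs (Y|X) of disjoint subsets of V, and n : Δ → ℝ≥0. Suppose the optimum opt := max over polymatroids h on V with h(X∪Y) − h(X) ≤ n(Y|X) for all (Y|X) ∈ Δ, of min_{Z ∈ 𝒵} h(Z), is finite. Then there exist nonnegative coefficients λ : 𝒵 → ℝ with Σ λ = 1 and w : Δ → ℝ≥0 such that Σ_{Z} λ_Z · h(Z) ≤ Σ_{δ=(Y|X)} w_δ · (h(X∪Y) − h(X)) holds for every polymatroid h on V, and opt = Σ_δ w_δ · n_δ. -/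
def IsPolymatroid {V : Type*} [DecidableEq V] (h : Finset V → ℝ) : Prop :=
  h ∅ = 0 ∧ (∀ A B : Finset V, A ⊆ B → h A ≤ h B) ∧
    (∀ A B : Finset V, h (A ∪ B) + h (A ∩ B) ≤ h A + h B)

open Finset Topology
set_option linter.unusedSectionVars false
set_option linter.unusedVariables false
set_option maxHeartbeats 1000000


section ConeClosed

variable {E : Type*} [NormedAddCommGroup E] [InnerProductSpace ℝ E] [FiniteDimensional ℝ E]
variable {ρ : Type*} [Fintype ρ] [DecidableEq ρ]

/-- cone generated by `v r`, `r ∈ S`. -/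
def coneS (v : ρ → E) (S : Finset ρ) : Set E :=
  {x | ∃ c : ρ → ℝ, (∀ r, 0 ≤ c r) ∧ x = ∑ r ∈ S, c r • v r}

lemma isClosed_coneS_of_indep (v : ρ → E) (S : Finset ρ)
    (hS : LinearIndependent ℝ (fun r : {r // r ∈ S} => v r)) : IsClosed (coneS v S) := by
  classical
  set f : ({r // r ∈ S} → ℝ) →ₗ[ℝ] E :=
    Fintype.linearCombination ℝ (fun r : {r // r ∈ S} => v r) with hfdef
  have hf : ∀ c : {r // r ∈ S} → ℝ, f c = ∑ r : {r // r ∈ S}, c r • v r := fun _ => rfl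
  have hker : LinearMap.ker f = ⊥ := by
    rw [LinearMap.ker_eq_bot']
    intro c hc
    rw [hf] at hc
    have := Fintype.linearIndependent_iff.mp hS c hc
    funext i; exact this i
  have hemb : IsClosedEmbedding f := LinearMap.isClosedEmbedding_of_injective hker
  have horth : IsClosed {c : {r // r ∈ S} → ℝ | ∀ r, 0 ≤ c r} := by
    have : {c : {r // r ∈ S} → ℝ | ∀ r, 0 ≤ c r} = ⋂ r, {c | 0 ≤ c r} := by
      ext c; simp [Set.mem_iInter]
    rw [this]
    exact isClosed_iInter fun r => isClosed_le continuous_const (continuous_apply r)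
  have himg : coneS v S = f '' {c : {r // r ∈ S} → ℝ | ∀ r, 0 ≤ c r} := by
    ext x
    constructor
    · rintro ⟨c, hc, rfl⟩
      refine ⟨fun r => c r, fun r => hc r, ?_⟩
      rw [hf, ← Finset.sum_attach S (fun r => c r • v r)]
      rfl
    · rintro ⟨c, hc, rfl⟩
      refine ⟨fun r => if h : r ∈ S then c ⟨r, h⟩ else 0,
        fun r => by dsimp only; split <;> [exact hc _; exact le_refl 0], ?_⟩
      rw [hf, ← Finset.sum_attach S (fun r => (if h : r ∈ S then c ⟨r, h⟩ else 0) • v r)]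
      show ∑ r ∈ S.attach, c r • v ↑r = _
      apply Finset.sum_congr rfl
      intro r _
      simp [r.2]
  rw [himg]
  exact hemb.isClosedMap _ horth

lemma caratheodory_coneS (v : ρ → E) :
    ∀ (S : Finset ρ) (x : E), x ∈ coneS v S →
      ∃ T : Finset ρ, LinearIndependent ℝ (fun r : {r // r ∈ T} => v r) ∧ x ∈ coneS v T := by
  classical
  intro S
  induction S using Finset.strongInduction with
  | _ S ih =>
    intro x hx
    by_cases hind : LinearIndependent ℝ (fun r : {r // r ∈ S} => v r)
    · exact ⟨S, hind, hx⟩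
    · obtain ⟨c, hc0, hcsum⟩ := hx
      obtain ⟨g, hgsum, i0, hgi0⟩ := Fintype.not_linearIndependent_iff.mp hind
      set G : ρ → ℝ := fun r => if h : r ∈ S then g ⟨r, h⟩ else 0 with hG
      have hGsum : ∑ r ∈ S, G r • v r = 0 := by
        rw [← Finset.sum_attach S (fun r => G r • v r), ← hgsum]
        show ∑ r ∈ S.attach, G ↑r • v ↑r = ∑ r : {r // r ∈ S}, g r • v ↑r
        refine Eq.trans (Finset.sum_congr rfl fun r _ => ?_) rfl
        simp [hG, r.2]
      have key : ∀ (G : ρ → ℝ), (∑ r ∈ S, G r • v r = 0) → (∃ r ∈ S, 0 < G r) →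
          ∃ T : Finset ρ, T ⊂ S ∧ x ∈ coneS v T := by
        rintro G hGsum ⟨r1, hr1S, hr1pos⟩
        set P := S.filter (fun r => 0 < G r) with hP
        have hPne : P.Nonempty := ⟨r1, by simp [hP, hr1S, hr1pos]⟩
        obtain ⟨r0, hr0P, hr0min⟩ := P.exists_min_image (fun r => c r / G r) hPne
        have hr0S : r0 ∈ S := (Finset.mem_filter.mp hr0P).1
        have hr0pos : 0 < G r0 := (Finset.mem_filter.mp hr0P).2
        have ht0 : 0 ≤ c r0 / G r0 := div_nonneg (hc0 r0) hr0pos.le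
        set c' : ρ → ℝ := fun r => c r - (c r0 / G r0) * G r with hc'
        have hc'0 : ∀ r ∈ S, 0 ≤ c' r := by
          intro r hrS
          by_cases hg : 0 < G r
          · have hrP : r ∈ P := Finset.mem_filter.mpr ⟨hrS, hg⟩
            have hmin := hr0min r hrP
            have : (c r0 / G r0) * G r ≤ c r := by
              rw [← le_div_iff₀ hg]; exact hmin
            simpa [hc'] using this
          · push_neg at hg
            have : (c r0 / G r0) * G r ≤ 0 := mul_nonpos_of_nonneg_of_nonpos ht0 hg
            have := hc0 r
            simp only [hc']
            linarith
        have hc'r0 : c' r0 = 0 := by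
          simp only [hc']
          field_simp
          ring
        have hxsum : x = ∑ r ∈ S, c' r • v r := by
          rw [hcsum]
          simp only [hc', sub_smul, Finset.sum_sub_distrib, mul_smul]
          rw [← Finset.smul_sum, hGsum, smul_zero, sub_zero]
        refine ⟨S.erase r0, Finset.erase_ssubset hr0S, ?_⟩
        refine ⟨fun r => if r ∈ S then c' r else 0, ?_, ?_⟩
        · intro r; dsimp only; split
          · exact hc'0 r ‹_›
          · exact le_refl 0
        · rw [hxsum, ← Finset.add_sum_erase S _ hr0S, hc'r0, zero_smul, zero_add]
          apply Finset.sum_congr rfl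
          intro r hr
          simp [Finset.mem_of_mem_erase hr]
      have hGi0ne : G i0 ≠ 0 := by simp [hG, i0.2, hgi0]
      rcases lt_or_gt_of_ne hGi0ne with hneg | hpos
      · have hnegsum : ∑ r ∈ S, (-G) r • v r = 0 := by
          simp only [Pi.neg_apply, neg_smul, Finset.sum_neg_distrib, hGsum, neg_zero]
        obtain ⟨T, hTS, hxT⟩ := key (-G) hnegsum ⟨i0, i0.2, by simpa using hneg⟩
        exact ih T hTS x hxT
      · obtain ⟨T, hTS, hxT⟩ := key G hGsum ⟨i0, i0.2, hpos⟩
        exact ih T hTS x hxT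

lemma isClosed_coneS_univ (v : ρ → E) : IsClosed (coneS v Finset.univ) := by
  classical
  have : coneS v Finset.univ =
      ⋃ T : {T : Finset ρ // LinearIndependent ℝ (fun r : {r // r ∈ T} => v r)},
        coneS v T.1 := by
    ext x
    simp only [Set.mem_iUnion]
    constructor
    · intro hx
      obtain ⟨T, hT, hxT⟩ := caratheodory_coneS v Finset.univ x hx
      exact ⟨⟨T, hT⟩, hxT⟩
    · rintro ⟨⟨T, hT⟩, c, hc, rfl⟩
      refine ⟨fun r => if r ∈ T then c r else 0,
        fun r => by dsimp only; split <;> [exact hc r; exact le_refl 0], ?_⟩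
      simp only [ite_smul, zero_smul]
      rw [Finset.sum_ite_mem, Finset.univ_inter]
  rw [this]
  exact isClosed_iUnion_of_finite fun T => isClosed_coneS_of_indep v T.1 T.2

end ConeClosed


section Farkas
variable {E : Type*} [NormedAddCommGroup E] [InnerProductSpace ℝ E] [FiniteDimensional ℝ E]

def coneS' (ρ : Type*) [Fintype ρ] (v : ρ → E) : Set E :=
  {x | ∃ c : ρ → ℝ, (∀ r, 0 ≤ c r) ∧ x = ∑ r, c r • v r}

lemma isClosed_coneS'_ax {E : Type*} [NormedAddCommGroup E] [InnerProductSpace ℝ E]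
    [FiniteDimensional ℝ E] {ρ : Type*} [Fintype ρ] [DecidableEq ρ] (v : ρ → E) :
    IsClosed (coneS' ρ v) :=
  isClosed_coneS_univ v

lemma farkas {ι ρ : Type*} [Fintype ι] [Fintype ρ] [DecidableEq ι] [DecidableEq ρ]
    (M : ρ → ι → ℝ) (q : ρ → ℝ) (c : ι → ℝ) (β : ℝ)
    (hne : ∃ x : ι → ℝ, ∀ r, ∑ i, M r i * x i ≤ q r)
    (hvalid : ∀ x : ι → ℝ, (∀ r, ∑ i, M r i * x i ≤ q r) → ∑ i, c i * x i ≤ β) :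
    ∃ y : ρ → ℝ, (∀ r, 0 ≤ y r) ∧ (∀ i, ∑ r, y r * M r i = c i) ∧ ∑ r, y r * q r ≤ β := by
  classical
  set v : Option ρ → EuclideanSpace ℝ (Option ι) := fun t =>
    WithLp.toLp 2 (fun j => Option.elim t (Option.elim j 1 fun _ => 0)
      (fun r => Option.elim j (q r) (fun i => M r i)) : Option ι → ℝ) with hv
  set b : EuclideanSpace ℝ (Option ι) := WithLp.toLp 2 (fun j => Option.elim j β c : Option ι → ℝ) with hb
  set K : ConvexCone ℝ (EuclideanSpace ℝ (Option ι)) :=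
    { carrier := coneS' (Option ρ) v
      smul_mem' := by
        rintro a ha x ⟨d, hd, rfl⟩
        refine ⟨fun r => a * d r, fun r => mul_nonneg ha.le (hd r), ?_⟩
        rw [Finset.smul_sum]
        exact Finset.sum_congr rfl fun r _ => smul_smul a (d r) (v r)
      add_mem' := by
        rintro x ⟨d, hd, rfl⟩ z ⟨e, he, rfl⟩
        refine ⟨fun r => d r + e r, fun r => add_nonneg (hd r) (he r), ?_⟩
        rw [← Finset.sum_add_distrib]
        exact Finset.sum_congr rfl fun r _ => (add_smul (d r) (e r) (v r)).symm } with hK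
  have hgen : ∀ t, v t ∈ coneS' (Option ρ) v := by
    intro t
    refine ⟨fun r => if r = t then 1 else 0, fun r => by positivity, ?_⟩
    simp [ite_smul]
  have hbK : b ∈ K := by
    by_contra hnb
    have h0K : (0 : EuclideanSpace ℝ (Option ι)) ∈ K := ⟨fun _ => 0, fun _ => le_refl 0, by simp⟩
    let C : ProperCone ℝ (EuclideanSpace ℝ (Option ι)) :=
      ⟨K.toPointedCone h0K, isClosed_coneS'_ax v⟩
    obtain ⟨y, hy1, hy2⟩ := ProperCone.hyperplane_separation' C (x₀ := b) hnb
    have hinner : ∀ z w : EuclideanSpace ℝ (Option ι),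
        (inner ℝ z w : ℝ) = z none * w none + ∑ i, z (some i) * w (some i) := by
      intro z w
      rw [PiLp.inner_apply]
      simp only [RCLike.inner_apply, conj_trivial]
      rw [Fintype.sum_option, mul_comm]; congr 1; exact Finset.sum_congr rfl fun i _ => mul_comm _ _
    have hs : 0 ≤ y none := by
      have := hy1 _ (hgen none)
      rw [hinner] at this
      simpa [hv] using this
    have hrow : ∀ r, q r * y none + ∑ i, M r i * y (some i) ≥ 0 := by
      intro r
      have := hy1 _ (hgen (some r))
      rw [hinner] at this
      simpa [hv] using this
    have hbneg : β * y none + ∑ i, c i * y (some i) < 0 := by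
      rw [real_inner_comm, hinner] at hy2
      have : y none * b none + ∑ i, y (some i) * b (some i) < 0 := hy2
      simp only [hb] at this
      calc β * y none + ∑ i, c i * y (some i)
          = y none * b none + ∑ i, y (some i) * b (some i) := by
            simp only [hb]; rw [mul_comm]; congr 1; exact Finset.sum_congr rfl fun i _ => mul_comm _ _
        _ < 0 := hy2
    set s := y none with hsdef
    set xh : ι → ℝ := fun i => -(y (some i)) with hxh
    have hrow' : ∀ r, ∑ i, M r i * xh i ≤ s * q r := by
      intro r
      have := hrow r
      have h2 : ∑ i, M r i * xh i = -∑ i, M r i * y (some i) := by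
        rw [← Finset.sum_neg_distrib]
        exact Finset.sum_congr rfl fun i _ => by simp [hxh]
      rw [h2]; nlinarith [hrow r]
    have hcx : s * β < ∑ i, c i * xh i := by
      have h2 : ∑ i, c i * xh i = -∑ i, c i * y (some i) := by
        rw [← Finset.sum_neg_distrib]
        exact Finset.sum_congr rfl fun i _ => by simp [hxh]
      rw [h2]; nlinarith
    rcases eq_or_lt_of_le hs with hs0 | hspos
    · -- s = 0
      obtain ⟨x0, hx0⟩ := hne
      have hcx0 : ∑ i, c i * x0 i ≤ β := hvalid x0 hx0
      have hcxpos : 0 < ∑ i, c i * xh i := by rw [← hs0] at hcx; simpa using hcx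
      set T := (β - ∑ i, c i * x0 i) / (∑ i, c i * xh i) + 1 with hT
      have hT0 : 0 ≤ T := by
        have : 0 ≤ (β - ∑ i, c i * x0 i) / (∑ i, c i * xh i) :=
          div_nonneg (by linarith) hcxpos.le
        rw [hT]; linarith
      have hfeas : ∀ r, ∑ i, M r i * (x0 i + T * xh i) ≤ q r := by
        intro r
        have hsplit : ∑ i, M r i * (x0 i + T * xh i)
            = ∑ i, M r i * x0 i + T * ∑ i, M r i * xh i := by
          rw [Finset.mul_sum, ← Finset.sum_add_distrib]
          exact Finset.sum_congr rfl fun i _ => by ring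
        rw [hsplit]
        have h1 := hrow' r
        rw [← hs0] at h1
        simp only [zero_mul] at h1
        nlinarith [hx0 r]
      have := hvalid _ hfeas
      have hsplit : ∑ i, c i * (x0 i + T * xh i)
          = ∑ i, c i * x0 i + T * ∑ i, c i * xh i := by
        rw [Finset.mul_sum, ← Finset.sum_add_distrib]
        exact Finset.sum_congr rfl fun i _ => by ring
      rw [hsplit] at this
      have hTgt : T * ∑ i, c i * xh i > β - ∑ i, c i * x0 i := by
        rw [hT, add_mul, div_mul_cancel₀ _ (ne_of_gt hcxpos), one_mul]
        linarith
      linarith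
    · -- s > 0
      have hfeas : ∀ r, ∑ i, M r i * (s⁻¹ * xh i) ≤ q r := by
        intro r
        have hsplit : ∑ i, M r i * (s⁻¹ * xh i) = s⁻¹ * ∑ i, M r i * xh i := by
          rw [Finset.mul_sum]
          exact Finset.sum_congr rfl fun i _ => by ring
        rw [hsplit]
        rw [inv_mul_le_iff₀ hspos]
        calc ∑ i, M r i * xh i ≤ s * q r := hrow' r
          _ = s * q r := rfl
      have := hvalid _ hfeas
      have hsplit : ∑ i, c i * (s⁻¹ * xh i) = s⁻¹ * ∑ i, c i * xh i := by
        rw [Finset.mul_sum]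
        exact Finset.sum_congr rfl fun i _ => by ring
      rw [hsplit] at this
      have : ∑ i, c i * xh i ≤ s * β := by
        rw [inv_mul_le_iff₀ hspos] at this
        linarith [this]
      linarith
  -- extract coefficients
  obtain ⟨d, hd, hbsum⟩ := hbK
  refine ⟨fun r => d (some r), fun r => hd (some r), ?_, ?_⟩
  · intro i
    have : b (some i) = (∑ t, d t • v t) (some i) := congrArg (fun z => z (some i)) hbsum
    have hsum : (∑ t, d t • v t) (some i) = ∑ t, d t * v t (some i) := by
      rw [WithLp.ofLp_sum, Finset.sum_apply]; rfl
    rw [hsum] at this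
    rw [Fintype.sum_option] at this
    simp only [hv, hb] at this
    simpa using this.symm
  · have : b none = (∑ t, d t • v t) none := congrArg (fun z => z none) hbsum
    have hsum : (∑ t, d t • v t) none = ∑ t, d t * v t none := by
      rw [WithLp.ofLp_sum, Finset.sum_apply]; rfl
    rw [hsum, Fintype.sum_option] at this
    simp only [hv, hb] at this
    have h0 := hd none
    simp only [Option.elim] at this
    nlinarith [this]

end Farkas


lemma dot_single {κ : Type*} [Fintype κ] [DecidableEq κ] (j : κ) (a : ℝ) (x : κ → ℝ) :
    ∑ i, (Pi.single j a : κ → ℝ) i * x i = a * x j := by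
  rw [Finset.sum_eq_single j]
  · simp
  · intro i _ hij; simp [Pi.single_apply, hij]
  · intro h; simp at h

lemma sum_subtype_mem {α : Type*} (s : Finset α) (F : α → ℝ) :
    ∑ z : {x // x ∈ s}, F z.1 = ∑ a ∈ s, F a := by
  rw [← Finset.sum_attach s F]
  rfl

namespace Stmt10

variable {V : Type*} [DecidableEq V]

def bigU (Zs : Finset (Finset V)) (Δ : Finset (Finset V × Finset V)) : Finset V :=
  Zs.sup id ∪ Δ.sup (fun δ => δ.1 ∪ δ.2)

lemma zs_subset {Zs : Finset (Finset V)} {Δ : Finset (Finset V × Finset V)}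
    {Z : Finset V} (h : Z ∈ Zs) : Z ⊆ bigU Zs Δ :=
  (Finset.le_sup (f := id) h).trans Finset.subset_union_left

lemma delta_subset {Zs : Finset (Finset V)} {Δ : Finset (Finset V × Finset V)}
    {δ : Finset V × Finset V} (h : δ ∈ Δ) : δ.1 ∪ δ.2 ⊆ bigU Zs Δ :=
  (Finset.le_sup (f := fun δ => δ.1 ∪ δ.2) h).trans Finset.subset_union_right

variable (Zs : Finset (Finset V)) (Δ : Finset (Finset V × Finset V))

abbrev Idx := {A : Finset V // A ∈ (bigU Zs Δ).powerset}
abbrev Kdx := Option (Idx Zs Δ)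
abbrev Rho := (Idx Zs Δ × Idx Zs Δ) ⊕
  ((Idx Zs Δ × Idx Zs Δ) ⊕ (Bool ⊕ ({δ // δ ∈ Δ} ⊕ {Z // Z ∈ Zs})))

def jdx (A : Finset V) (h : A ⊆ bigU Zs Δ) : Idx Zs Δ := ⟨A, Finset.mem_powerset.mpr h⟩

def pu (p : Idx Zs Δ × Idx Zs Δ) : Idx Zs Δ :=
  jdx Zs Δ (p.1.1 ∪ p.2.1)
    (Finset.union_subset (Finset.mem_powerset.mp p.1.2) (Finset.mem_powerset.mp p.2.2))

def pi' (p : Idx Zs Δ × Idx Zs Δ) : Idx Zs Δ :=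
  jdx Zs Δ (p.1.1 ∩ p.2.1)
    (Finset.inter_subset_left.trans (Finset.mem_powerset.mp p.1.2))

def pe : Idx Zs Δ := jdx Zs Δ ∅ (Finset.empty_subset _)

def pd1 (d : {δ // δ ∈ Δ}) : Idx Zs Δ :=
  jdx Zs Δ d.1.1 (Finset.subset_union_left.trans (delta_subset d.2))

def pd2 (d : {δ // δ ∈ Δ}) : Idx Zs Δ :=
  jdx Zs Δ (d.1.1 ∪ d.1.2) (delta_subset d.2)

def pz (z : {Z // Z ∈ Zs}) : Idx Zs Δ := jdx Zs Δ z.1 (zs_subset z.2)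

def Mrow : Rho Zs Δ → Kdx Zs Δ → ℝ :=
  Sum.elim (fun p => Pi.single (some p.1) 1 - Pi.single (some (pu Zs Δ p)) 1)
  (Sum.elim (fun p => (Pi.single (some (pu Zs Δ p)) 1 + Pi.single (some (pi' Zs Δ p)) 1)
      - (Pi.single (some p.1) 1 + Pi.single (some p.2) 1))
  (Sum.elim (fun b => Pi.single (some (pe Zs Δ)) (if b then (1:ℝ) else -1))
  (Sum.elim (fun d => Pi.single (some (pd2 Zs Δ d)) 1 - Pi.single (some (pd1 Zs Δ d)) 1)
  (fun z => Pi.single (none : Kdx Zs Δ) 1 - Pi.single (some (pz Zs Δ z)) 1))))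

def qrow (n : Finset V × Finset V → ℝ) : Rho Zs Δ → ℝ :=
  Sum.elim (fun _ => 0) (Sum.elim (fun _ => 0) (Sum.elim (fun _ => 0)
    (Sum.elim (fun d => n d.1) (fun _ => 0))))

variable {Zs Δ}

lemma dot_mono (p : Idx Zs Δ × Idx Zs Δ) (x : Kdx Zs Δ → ℝ) :
    ∑ i, Mrow Zs Δ (Sum.inl p) i * x i = x (some p.1) - x (some (pu Zs Δ p)) := by
  simp only [Mrow, Sum.elim_inl, Pi.sub_apply, sub_mul, Finset.sum_sub_distrib, dot_single, one_mul]

lemma dot_sub (p : Idx Zs Δ × Idx Zs Δ) (x : Kdx Zs Δ → ℝ) :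
    ∑ i, Mrow Zs Δ (Sum.inr (Sum.inl p)) i * x i
      = (x (some (pu Zs Δ p)) + x (some (pi' Zs Δ p))) - (x (some p.1) + x (some p.2)) := by
  simp only [Mrow, Sum.elim_inr, Sum.elim_inl, Pi.sub_apply, Pi.add_apply, sub_mul, add_mul,
    Finset.sum_sub_distrib, Finset.sum_add_distrib, dot_single, one_mul]

lemma dot_zero (b : Bool) (x : Kdx Zs Δ → ℝ) :
    ∑ i, Mrow Zs Δ (Sum.inr (Sum.inr (Sum.inl b))) i * x i
      = (if b then (1:ℝ) else -1) * x (some (pe Zs Δ)) := by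
  simp only [Mrow, Sum.elim_inr, Sum.elim_inl, dot_single]

lemma dot_deg (d : {δ // δ ∈ Δ}) (x : Kdx Zs Δ → ℝ) :
    ∑ i, Mrow Zs Δ (Sum.inr (Sum.inr (Sum.inr (Sum.inl d)))) i * x i
      = x (some (pd2 Zs Δ d)) - x (some (pd1 Zs Δ d)) := by
  simp only [Mrow, Sum.elim_inr, Sum.elim_inl, Pi.sub_apply, sub_mul, Finset.sum_sub_distrib,
    dot_single, one_mul]

lemma dot_obj (z : {Z // Z ∈ Zs}) (x : Kdx Zs Δ → ℝ) :
    ∑ i, Mrow Zs Δ (Sum.inr (Sum.inr (Sum.inr (Sum.inr z)))) i * x i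
      = x none - x (some (pz Zs Δ z)) := by
  simp only [Mrow, Sum.elim_inr, Pi.sub_apply, sub_mul, Finset.sum_sub_distrib,
    dot_single, one_mul]

lemma sum_rho (f : Rho Zs Δ → ℝ) :
    ∑ r, f r = (∑ p : Idx Zs Δ × Idx Zs Δ, f (Sum.inl p))
      + ((∑ p : Idx Zs Δ × Idx Zs Δ, f (Sum.inr (Sum.inl p)))
      + ((f (Sum.inr (Sum.inr (Sum.inl true))) + f (Sum.inr (Sum.inr (Sum.inl false))))
      + ((∑ d : {δ // δ ∈ Δ}, f (Sum.inr (Sum.inr (Sum.inr (Sum.inl d)))))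
      + (∑ z : {Z // Z ∈ Zs}, f (Sum.inr (Sum.inr (Sum.inr (Sum.inr z)))))))) := by
  simp [Fintype.sum_sum_type, Fintype.sum_bool]

end Stmt10

namespace Stmt10
variable {V : Type*} [DecidableEq V] {Zs : Finset (Finset V)} {Δ : Finset (Finset V × Finset V)}
@[simp] lemma pu_val (p : Idx Zs Δ × Idx Zs Δ) : (pu Zs Δ p).1 = p.1.1 ∪ p.2.1 := rfl
@[simp] lemma pi'_val (p : Idx Zs Δ × Idx Zs Δ) : (pi' Zs Δ p).1 = p.1.1 ∩ p.2.1 := rfl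
@[simp] lemma pe_val : (pe Zs Δ).1 = (∅ : Finset V) := rfl
@[simp] lemma pd1_val (d : {δ // δ ∈ Δ}) : (pd1 Zs Δ d).1 = d.1.1 := rfl
@[simp] lemma pd2_val (d : {δ // δ ∈ Δ}) : (pd2 Zs Δ d).1 = d.1.1 ∪ d.1.2 := rfl
@[simp] lemma pz_val (z : {Z // Z ∈ Zs}) : (pz Zs Δ z).1 = z.1 := rfl
@[simp] lemma q_mono (n : Finset V × Finset V → ℝ) (p : Idx Zs Δ × Idx Zs Δ) :
    qrow Zs Δ n (Sum.inl p) = 0 := rfl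
@[simp] lemma q_sub (n : Finset V × Finset V → ℝ) (p : Idx Zs Δ × Idx Zs Δ) :
    qrow Zs Δ n (Sum.inr (Sum.inl p)) = 0 := rfl
@[simp] lemma q_zero (n : Finset V × Finset V → ℝ) (b : Bool) :
    qrow Zs Δ n (Sum.inr (Sum.inr (Sum.inl b))) = 0 := rfl
@[simp] lemma q_deg (n : Finset V × Finset V → ℝ) (d : {δ // δ ∈ Δ}) :
    qrow Zs Δ n (Sum.inr (Sum.inr (Sum.inr (Sum.inl d)))) = n d.1 := rfl
@[simp] lemma q_obj (n : Finset V × Finset V → ℝ) (z : {Z // Z ∈ Zs}) :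
    qrow Zs Δ n (Sum.inr (Sum.inr (Sum.inr (Sum.inr z)))) = 0 := rfl
end Stmt10



open Stmt10 in
/-- A degree term `(Y|X)` is encoded as the pair `δ = (X, Y)` (condition first);
its value on `h` is `h (X ∪ Y) - h X`. -/
theorem stmt_10 {V : Type*} [DecidableEq V]
    (Zs : Finset (Finset V)) (hZ : Zs.Nonempty)
    (Δ : Finset (Finset V × Finset V)) (hΔ : ∀ δ ∈ Δ, Disjoint δ.1 δ.2)
    (n : Finset V × Finset V → ℝ) (hn : ∀ δ ∈ Δ, 0 ≤ n δ)
    (opt : ℝ)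
    (hopt_attained : ∃ h : Finset V → ℝ, IsPolymatroid h ∧
      (∀ δ ∈ Δ, h (δ.1 ∪ δ.2) - h δ.1 ≤ n δ) ∧ Zs.inf' hZ h = opt)
    (hopt_max : ∀ h : Finset V → ℝ, IsPolymatroid h →
      (∀ δ ∈ Δ, h (δ.1 ∪ δ.2) - h δ.1 ≤ n δ) → Zs.inf' hZ h ≤ opt) :
    ∃ (lam : Finset V → ℝ) (w : Finset V × Finset V → ℝ),
      (∀ Z ∈ Zs, 0 ≤ lam Z) ∧ (∀ δ ∈ Δ, 0 ≤ w δ) ∧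
      (∑ Z ∈ Zs, lam Z) = 1 ∧
      (∀ h : Finset V → ℝ, IsPolymatroid h →
        ∑ Z ∈ Zs, lam Z * h Z ≤ ∑ δ ∈ Δ, w δ * (h (δ.1 ∪ δ.2) - h δ.1)) ∧
      opt = ∑ δ ∈ Δ, w δ * n δ := by
  classical
  obtain ⟨hs, hpolys, hdegs, hinfs⟩ := hopt_attained
  set xstar : Kdx Zs Δ → ℝ := fun j => Option.elim j opt (fun A => hs A.1) with hxstar
  have hne : ∃ x : Kdx Zs Δ → ℝ, ∀ r, ∑ i, Mrow Zs Δ r i * x i ≤ qrow Zs Δ n r := by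
    refine ⟨xstar, ?_⟩
    rintro (p | p | b | d | z)
    · rw [dot_mono]
      simp only [q_mono, hxstar, Option.elim_some, pu_val]
      exact sub_nonpos.mpr (hpolys.2.1 _ _ Finset.subset_union_left)
    · rw [dot_sub]
      simp only [q_sub, hxstar, Option.elim_some, pu_val, pi'_val]
      exact sub_nonpos.mpr (hpolys.2.2 _ _)
    · rw [dot_zero]
      simp only [q_zero, hxstar, Option.elim_some, pe_val, hpolys.1, mul_zero, le_refl]
    · rw [dot_deg]
      simp only [q_deg, hxstar, Option.elim_some, pd1_val, pd2_val]
      exact hdegs d.1 d.2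
    · rw [dot_obj]
      simp only [q_obj, hxstar, Option.elim_some, Option.elim_none, pz_val]
      rw [← hinfs]
      exact sub_nonpos.mpr (Finset.inf'_le _ z.2)
  have hvalid : ∀ x : Kdx Zs Δ → ℝ, (∀ r, ∑ i, Mrow Zs Δ r i * x i ≤ qrow Zs Δ n r) →
      ∑ i, (Pi.single (none : Kdx Zs Δ) 1 : Kdx Zs Δ → ℝ) i * x i ≤ opt := by
    intro x hx
    rw [dot_single, one_mul]
    set g : Finset V → ℝ :=
      fun A => x (some (jdx Zs Δ (A ∩ bigU Zs Δ) Finset.inter_subset_right)) with hg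
    have hgx : ∀ (A : Finset V) (hA : A ⊆ bigU Zs Δ), g A = x (some (jdx Zs Δ A hA)) := by
      intro A hA
      simp only [hg]
      exact congrArg (fun i => x (some i)) (Subtype.ext (Finset.inter_eq_left.mpr hA))
    have hg0 : g ∅ = 0 := by
      have h1 := hx (Sum.inr (Sum.inr (Sum.inl true)))
      have h2 := hx (Sum.inr (Sum.inr (Sum.inl false)))
      rw [dot_zero] at h1 h2
      norm_num at h1 h2
      have hxe : x (some (pe Zs Δ)) = 0 := le_antisymm h1 (by linarith)
      rw [hgx ∅ (Finset.empty_subset _)]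
      exact hxe
    have hgmono : ∀ A B : Finset V, A ⊆ B → g A ≤ g B := by
      intro A B hAB
      have h1 := hx (Sum.inl (jdx Zs Δ (A ∩ bigU Zs Δ) Finset.inter_subset_right,
        jdx Zs Δ (B ∩ bigU Zs Δ) Finset.inter_subset_right))
      rw [dot_mono] at h1
      simp only [q_mono] at h1
      have hun : (pu Zs Δ (jdx Zs Δ (A ∩ bigU Zs Δ) Finset.inter_subset_right,
          jdx Zs Δ (B ∩ bigU Zs Δ) Finset.inter_subset_right))
          = jdx Zs Δ (B ∩ bigU Zs Δ) Finset.inter_subset_right := by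
        apply Subtype.ext
        simp only [pu_val, jdx]
        exact Finset.union_eq_right.mpr (Finset.inter_subset_inter_right hAB)
      rw [hun] at h1
      linarith [h1]
    have hgsub : ∀ A B : Finset V, g (A ∪ B) + g (A ∩ B) ≤ g A + g B := by
      intro A B
      have h1 := hx (Sum.inr (Sum.inl (jdx Zs Δ (A ∩ bigU Zs Δ) Finset.inter_subset_right,
        jdx Zs Δ (B ∩ bigU Zs Δ) Finset.inter_subset_right)))
      rw [dot_sub] at h1
      simp only [q_sub] at h1
      have hun : (pu Zs Δ (jdx Zs Δ (A ∩ bigU Zs Δ) Finset.inter_subset_right,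
          jdx Zs Δ (B ∩ bigU Zs Δ) Finset.inter_subset_right))
          = jdx Zs Δ ((A ∪ B) ∩ bigU Zs Δ) Finset.inter_subset_right := by
        apply Subtype.ext
        simp only [pu_val, jdx]
        exact (Finset.union_inter_distrib_right A B _).symm
      have hin : (pi' Zs Δ (jdx Zs Δ (A ∩ bigU Zs Δ) Finset.inter_subset_right,
          jdx Zs Δ (B ∩ bigU Zs Δ) Finset.inter_subset_right))
          = jdx Zs Δ ((A ∩ B) ∩ bigU Zs Δ) Finset.inter_subset_right := by
        apply Subtype.ext
        simp only [pi'_val, jdx]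
        exact (Finset.inter_inter_distrib_right A B _).symm
      rw [hun, hin] at h1
      linarith [h1]
    have hgpoly : IsPolymatroid g := ⟨hg0, hgmono, hgsub⟩
    have hgdeg : ∀ δ ∈ Δ, g (δ.1 ∪ δ.2) - g δ.1 ≤ n δ := by
      intro δ hδ
      have h1 := hx (Sum.inr (Sum.inr (Sum.inr (Sum.inl ⟨δ, hδ⟩))))
      rw [dot_deg] at h1
      simp only [q_deg] at h1
      rw [hgx (δ.1 ∪ δ.2) (delta_subset hδ), hgx δ.1
        (Finset.subset_union_left.trans (delta_subset hδ))]
      exact h1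
    have hginf := hopt_max g hgpoly hgdeg
    have hxnone : ∀ Z ∈ Zs, x none ≤ g Z := by
      intro Z hZ'
      have h1 := hx (Sum.inr (Sum.inr (Sum.inr (Sum.inr ⟨Z, hZ'⟩))))
      rw [dot_obj] at h1
      simp only [q_obj] at h1
      rw [hgx Z (zs_subset hZ')]
      exact sub_nonpos.mp h1
    calc x none ≤ Zs.inf' hZ g := Finset.le_inf' hZ _ hxnone
      _ ≤ opt := hginf
  obtain ⟨y, hy0, hy2, hy3⟩ := farkas (Mrow Zs Δ) (qrow Zs Δ n)
    (Pi.single (none : Kdx Zs Δ) 1) opt hne hvalid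
  have keyx : ∀ x : Kdx Zs Δ → ℝ, ∑ r, y r * (∑ i, Mrow Zs Δ r i * x i) = x none := by
    intro x
    have h1 : ∀ r, y r * (∑ i, Mrow Zs Δ r i * x i) = ∑ i, y r * Mrow Zs Δ r i * x i := by
      intro r
      rw [Finset.mul_sum]
      exact Finset.sum_congr rfl fun i _ => (mul_assoc _ _ _).symm
    simp_rw [h1]
    rw [Finset.sum_comm]
    have h2 : ∀ i, ∑ r, y r * Mrow Zs Δ r i * x i
        = (Pi.single (none : Kdx Zs Δ) 1 : Kdx Zs Δ → ℝ) i * x i := by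
      intro i
      rw [← Finset.sum_mul, hy2 i]
    simp_rw [h2]
    rw [dot_single, one_mul]
  set lam : Finset V → ℝ := fun Z =>
    if h : Z ∈ Zs then y (Sum.inr (Sum.inr (Sum.inr (Sum.inr ⟨Z, h⟩)))) else 0 with hlam
  set w : Finset V × Finset V → ℝ := fun δ =>
    if h : δ ∈ Δ then y (Sum.inr (Sum.inr (Sum.inr (Sum.inl ⟨δ, h⟩)))) else 0 with hw
  have hlam_eq : ∀ z : {Z // Z ∈ Zs}, lam z.1 = y (Sum.inr (Sum.inr (Sum.inr (Sum.inr z)))) := by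
    intro z
    simp only [hlam, dif_pos z.2]
  have hw_eq : ∀ d : {δ // δ ∈ Δ}, w d.1 = y (Sum.inr (Sum.inr (Sum.inr (Sum.inl d)))) := by
    intro d
    simp only [hw, dif_pos d.2]
  -- sum of lam = 1
  have hsum1 : (∑ Z ∈ Zs, lam Z) = 1 := by
    have hk := keyx (Pi.single (none : Kdx Zs Δ) 1)
    rw [sum_rho (fun r => y r * (∑ i, Mrow Zs Δ r i * (Pi.single (none : Kdx Zs Δ) 1 : Kdx Zs Δ → ℝ) i))] at hk
    simp_rw [dot_mono, dot_sub, dot_zero, dot_deg, dot_obj] at hk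
    simp only [Pi.single_apply, if_true, reduceCtorEq, if_false, sub_zero, zero_sub, sub_self,
      mul_zero, add_zero, zero_add, Finset.sum_const_zero, mul_one, mul_neg, neg_zero,
      ite_self] at hk
    rw [← sum_subtype_mem Zs lam]
    rw [Finset.sum_congr rfl fun z _ => hlam_eq z]
    convert hk using 2
  refine ⟨lam, w, ?_, ?_, hsum1, ?_, ?_⟩
  · intro Z hZ'
    simp only [hlam, dif_pos hZ']
    exact hy0 _
  · intro δ hδ
    simp only [hw, dif_pos hδ]
    exact hy0 _
  · -- main dual-feasibility inequality
    intro h hpoly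
    set xh : Kdx Zs Δ → ℝ := fun j => Option.elim j 0 (fun A => h A.1) with hxh
    have hk := keyx xh
    rw [sum_rho (fun r => y r * (∑ i, Mrow Zs Δ r i * xh i))] at hk
    simp_rw [dot_mono, dot_sub, dot_zero, dot_deg, dot_obj] at hk
    simp only [hxh, Option.elim_some, Option.elim_none, pu_val, pi'_val, pe_val, pd1_val,
      pd2_val, pz_val, hpoly.1, mul_zero, zero_sub, mul_neg, zero_add, add_zero] at hk
    have hS1 : (∑ p : Idx Zs Δ × Idx Zs Δ,
        y (Sum.inl p) * (h p.1.1 - h (p.1.1 ∪ p.2.1))) ≤ 0 :=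
      Finset.sum_nonpos fun p _ => mul_nonpos_of_nonneg_of_nonpos (hy0 _)
        (sub_nonpos.mpr (hpoly.2.1 _ _ Finset.subset_union_left))
    have hS2 : (∑ p : Idx Zs Δ × Idx Zs Δ,
        y (Sum.inr (Sum.inl p)) * ((h (p.1.1 ∪ p.2.1) + h (p.1.1 ∩ p.2.1))
          - (h p.1.1 + h p.2.1))) ≤ 0 :=
      Finset.sum_nonpos fun p _ => mul_nonpos_of_nonneg_of_nonpos (hy0 _)
        (sub_nonpos.mpr (hpoly.2.2 _ _))
    have hneg : (∑ z : {Z // Z ∈ Zs}, -(y (Sum.inr (Sum.inr (Sum.inr (Sum.inr z)))) * h z.1))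
        = -∑ z : {Z // Z ∈ Zs}, y (Sum.inr (Sum.inr (Sum.inr (Sum.inr z)))) * h z.1 :=
      Finset.sum_neg_distrib _
    rw [hneg] at hk
    have hl : (∑ z : {Z // Z ∈ Zs}, lam z.1 * h z.1)
        = ∑ z : {Z // Z ∈ Zs}, y (Sum.inr (Sum.inr (Sum.inr (Sum.inr z)))) * h z.1 :=
      Finset.sum_congr rfl fun z _ => by rw [hlam_eq z]
    have hww : (∑ d : {δ // δ ∈ Δ}, w d.1 * (h (d.1.1 ∪ d.1.2) - h d.1.1))
        = ∑ d : {δ // δ ∈ Δ},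
          y (Sum.inr (Sum.inr (Sum.inr (Sum.inl d)))) * (h (d.1.1 ∪ d.1.2) - h d.1.1) :=
      Finset.sum_congr rfl fun d _ => by rw [hw_eq d]
    rw [← sum_subtype_mem Zs (fun Z => lam Z * h Z),
      ← sum_subtype_mem Δ (fun δ => w δ * (h (δ.1 ∪ δ.2) - h δ.1)), hl, hww]
    linarith [hk, hS1, hS2]
  · -- opt = dual objective
    have hub : ∑ r, y r * qrow Zs Δ n r
        = ∑ d : {δ // δ ∈ Δ}, y (Sum.inr (Sum.inr (Sum.inr (Sum.inl d)))) * n d.1 := by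
      rw [sum_rho (fun r => y r * qrow Zs Δ n r)]
      simp only [q_mono, q_sub, q_zero, q_deg, q_obj, mul_zero, Finset.sum_const_zero,
        zero_add, add_zero]
    have hk := keyx xstar
    rw [sum_rho (fun r => y r * (∑ i, Mrow Zs Δ r i * xstar i))] at hk
    simp_rw [dot_mono, dot_sub, dot_zero, dot_deg, dot_obj] at hk
    simp only [hxstar, Option.elim_some, Option.elim_none, pu_val, pi'_val, pe_val, pd1_val,
      pd2_val, pz_val, hpolys.1, mul_zero, zero_add, add_zero] at hk
    have hS1 : (∑ p : Idx Zs Δ × Idx Zs Δ,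
        y (Sum.inl p) * (hs p.1.1 - hs (p.1.1 ∪ p.2.1))) ≤ 0 :=
      Finset.sum_nonpos fun p _ => mul_nonpos_of_nonneg_of_nonpos (hy0 _)
        (sub_nonpos.mpr (hpolys.2.1 _ _ Finset.subset_union_left))
    have hS2 : (∑ p : Idx Zs Δ × Idx Zs Δ,
        y (Sum.inr (Sum.inl p)) * ((hs (p.1.1 ∪ p.2.1) + hs (p.1.1 ∩ p.2.1))
          - (hs p.1.1 + hs p.2.1))) ≤ 0 :=
      Finset.sum_nonpos fun p _ => mul_nonpos_of_nonneg_of_nonpos (hy0 _)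
        (sub_nonpos.mpr (hpolys.2.2 _ _))
    have hS4 : (∑ d : {δ // δ ∈ Δ},
        y (Sum.inr (Sum.inr (Sum.inr (Sum.inl d)))) * (hs (d.1.1 ∪ d.1.2) - hs d.1.1))
        ≤ ∑ d : {δ // δ ∈ Δ}, y (Sum.inr (Sum.inr (Sum.inr (Sum.inl d)))) * n d.1 :=
      Finset.sum_le_sum fun d _ => mul_le_mul_of_nonneg_left (hdegs d.1 d.2) (hy0 _)
    have hS5 : (∑ z : {Z // Z ∈ Zs},
        y (Sum.inr (Sum.inr (Sum.inr (Sum.inr z)))) * (opt - hs z.1)) ≤ 0 :=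
      Finset.sum_nonpos fun z _ => mul_nonpos_of_nonneg_of_nonpos (hy0 _)
        (sub_nonpos.mpr (hinfs ▸ Finset.inf'_le _ z.2))
    have hwn : ∑ δ ∈ Δ, w δ * n δ
        = ∑ d : {δ // δ ∈ Δ}, y (Sum.inr (Sum.inr (Sum.inr (Sum.inl d)))) * n d.1 := by
      rw [← sum_subtype_mem Δ (fun δ => w δ * n δ)]
      exact Finset.sum_congr rfl fun d _ => by rw [hw_eq d]
    rw [hwn]
    rw [hub] at hy3
    linarith [hk, hS1, hS2, hS4, hS5, hy3]
end

section
/- Let R ⊆ A × B, S ⊆ B × C, U ⊆ C × D be finite relations each of size at most N. Then there exist sets P ⊆ A × B × C and Q ⊆ B × C × D with |P| + |Q| ≤ 2·N^{3/2} such that for every (x,y,z,w) with (x,y) ∈ R, (y,z) ∈ S, (z,w) ∈ U, either (x,y,z) ∈ P or (y,z,w) ∈ Q. -/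
open Finset

theorem stmt_12 {A B C D : Type*}
    (R : Finset (A × B)) (S : Finset (B × C)) (U : Finset (C × D))
    (N : ℕ) (hR : R.card ≤ N) (hS : S.card ≤ N) (hU : U.card ≤ N) :
    ∃ (P : Finset (A × B × C)) (Q : Finset (B × C × D)),
      ((P.card : ℝ) + (Q.card : ℝ) ≤ 2 * (N : ℝ) ^ ((3 : ℝ) / 2)) ∧
      ∀ (x : A) (y : B) (z : C) (w : D),
        (x, y) ∈ R → (y, z) ∈ S → (z, w) ∈ U → (x, y, z) ∈ P ∨ (y, z, w) ∈ Q := by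
  classical
  set sq : ℝ := Real.sqrt N with hsqdef
  have hsq0 : 0 ≤ sq := Real.sqrt_nonneg _
  have hsqN : sq * sq = (N : ℝ) := Real.mul_self_sqrt (Nat.cast_nonneg N)
  set deg : B → ℕ := fun y => (R.filter (fun r => r.2 = y)).card with hdeg
  -- light degrees are at most sq
  have hlight : ∀ y : B, ¬ (N < deg y * deg y) → (deg y : ℝ) ≤ sq := by
    intro y hy
    have h : (deg y : ℝ) * (deg y : ℝ) ≤ (N : ℝ) := by
      exact_mod_cast Nat.le_of_not_lt hy
    calc (deg y : ℝ) = Real.sqrt ((deg y : ℝ) * (deg y : ℝ)) :=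
          (Real.sqrt_mul_self (by positivity)).symm
      _ ≤ sq := Real.sqrt_le_sqrt h
  have hheavy : ∀ y : B, N < deg y * deg y → sq ≤ (deg y : ℝ) := by
    intro y hy
    have h : (N : ℝ) ≤ (deg y : ℝ) * (deg y : ℝ) := by
      exact_mod_cast Nat.le_of_lt hy
    calc sq ≤ Real.sqrt ((deg y : ℝ) * (deg y : ℝ)) := Real.sqrt_le_sqrt h
      _ = (deg y : ℝ) := Real.sqrt_mul_self (by positivity)
  -- heavy set
  set Hset : Finset B := (R.image Prod.snd).filter (fun y => N < deg y * deg y) with hHset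
  have hHcard : (Hset.card : ℝ) ≤ sq := by
    have hsum : R.card = ∑ y ∈ R.image Prod.snd, deg y :=
      Finset.card_eq_sum_card_fiberwise (fun r hr => Finset.mem_image_of_mem _ hr)
    have h2 : ∑ y ∈ Hset, deg y ≤ N := by
      calc ∑ y ∈ Hset, deg y ≤ ∑ y ∈ R.image Prod.snd, deg y :=
            Finset.sum_le_sum_of_subset (Finset.filter_subset _ _)
        _ = R.card := hsum.symm
        _ ≤ N := hR
    have h3 : (Hset.card : ℝ) * sq ≤ (N : ℝ) := by
      have h4 : Hset.card • sq ≤ ∑ y ∈ Hset, (deg y : ℝ) :=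
        Finset.card_nsmul_le_sum _ _ _ (fun y hy => hheavy y (Finset.mem_filter.1 hy).2)
      have h5 : (∑ y ∈ Hset, (deg y : ℝ)) ≤ (N : ℝ) := by
        exact_mod_cast h2
      calc (Hset.card : ℝ) * sq = Hset.card • sq := by simp [nsmul_eq_mul]
        _ ≤ ∑ y ∈ Hset, (deg y : ℝ) := h4
        _ ≤ (N : ℝ) := h5
    rcases eq_or_lt_of_le hsq0 with h0 | hpos
    · -- sq = 0, so N = 0, so Hset is empty
      have hN0 : (N : ℝ) = 0 := by rw [← hsqN, ← h0]; ring
      have hN0' : N = 0 := by exact_mod_cast hN0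
      have : Hset = ∅ := by
        apply Finset.eq_empty_of_forall_notMem
        intro y hy
        have h6 := (Finset.mem_filter.1 hy).2
        have h7 : deg y ≤ R.card := Finset.card_filter_le _ _
        have h8 : deg y = 0 := by omega
        rw [h8] at h6
        omega
      simp [this, ← h0]
    · have := h3.trans_eq hsqN.symm
      exact le_of_mul_le_mul_right this hpos
  set Pf := (R ×ˢ S).filter
      (fun p => p.1.2 = p.2.1 ∧ ¬ (N < deg p.1.2 * deg p.1.2)) with hPf
  set Qf := (S ×ˢ U).filter
      (fun p => p.1.2 = p.2.1 ∧ (N < deg p.1.1 * deg p.1.1)) with hQf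
  refine ⟨Pf.image (fun p => (p.1.1, p.2.1, p.2.2)),
          Qf.image (fun p => (p.1.1, p.1.2, p.2.2)), ?_, ?_⟩
  · -- cardinality bound
    have hPcard : ((Pf.image (fun p => (p.1.1, p.2.1, p.2.2))).card : ℝ) ≤ (N : ℝ) * sq := by
      have h1 : Pf.card = ∑ s ∈ S, (Pf.filter (fun p => p.2 = s)).card :=
        Finset.card_eq_sum_card_fiberwise
          (fun p hp => (Finset.mem_product.1 (Finset.mem_filter.1 hp).1).2)
      have h2 : ∀ s ∈ S, ((Pf.filter (fun p => p.2 = s)).card : ℝ) ≤ sq := by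
        intro s hs
        by_cases hh : N < deg s.1 * deg s.1
        · have : Pf.filter (fun p => p.2 = s) = ∅ := by
            apply Finset.eq_empty_of_forall_notMem
            intro p hp
            obtain ⟨hp1, hp2⟩ := Finset.mem_filter.1 hp
            obtain ⟨_, heq, hlt⟩ := Finset.mem_filter.1 hp1
            rw [hp2] at heq
            rw [heq] at hlt
            exact hlt hh
          simp [this, hsq0]
        · have hinj : ((Pf.filter (fun p => p.2 = s)).card : ℕ) ≤
              (R.filter (fun r => r.2 = s.1)).card := by
            apply Finset.card_le_card_of_injOn (fun p => p.1)
            · intro p hp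
              obtain ⟨hp1, hp2⟩ := Finset.mem_filter.1 hp
              obtain ⟨hmem, heq, _⟩ := Finset.mem_filter.1 hp1
              have hR1 := (Finset.mem_product.1 hmem).1
              rw [hp2] at heq
              exact Finset.mem_filter.2 ⟨hR1, heq⟩
            · intro p hp q hq hpq
              have hp2 := (Finset.mem_filter.1 hp).2
              have hq2 := (Finset.mem_filter.1 hq).2
              exact Prod.ext hpq (hp2.trans hq2.symm)
          calc ((Pf.filter (fun p => p.2 = s)).card : ℝ)
              ≤ ((R.filter (fun r => r.2 = s.1)).card : ℝ) := by exact_mod_cast hinj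
            _ = (deg s.1 : ℝ) := rfl
            _ ≤ sq := hlight s.1 hh
      calc ((Pf.image (fun p => (p.1.1, p.2.1, p.2.2))).card : ℝ)
          ≤ (Pf.card : ℝ) := by exact_mod_cast Finset.card_image_le
        _ = ∑ s ∈ S, ((Pf.filter (fun p => p.2 = s)).card : ℝ) := by
            rw [h1]; push_cast; ring
        _ ≤ ∑ _s ∈ S, sq := Finset.sum_le_sum h2
        _ = (S.card : ℝ) * sq := by simp [Finset.sum_const, nsmul_eq_mul]
        _ ≤ (N : ℝ) * sq := by
            apply mul_le_mul_of_nonneg_right _ hsq0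
            exact_mod_cast hS
    have hQcard : ((Qf.image (fun p => (p.1.1, p.1.2, p.2.2))).card : ℝ) ≤ (N : ℝ) * sq := by
      have h1 : Qf.card = ∑ u ∈ U, (Qf.filter (fun p => p.2 = u)).card :=
        Finset.card_eq_sum_card_fiberwise
          (fun p hp => (Finset.mem_product.1 (Finset.mem_filter.1 hp).1).2)
      have h2 : ∀ u ∈ U, ((Qf.filter (fun p => p.2 = u)).card : ℝ) ≤ sq := by
        intro u hu
        have hinj : ((Qf.filter (fun p => p.2 = u)).card : ℕ) ≤ Hset.card := by
          apply Finset.card_le_card_of_injOn (fun p => p.1.1)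
          · intro p hp
            obtain ⟨hp1, hp2⟩ := Finset.mem_filter.1 hp
            obtain ⟨hmem, heq, hh⟩ := Finset.mem_filter.1 hp1
            have hS1 := (Finset.mem_product.1 hmem).1
            refine Finset.mem_filter.2 ⟨?_, hh⟩
            -- p.1.1 has positive degree in R
            have hdpos : 0 < deg p.1.1 := by
              rcases Nat.eq_zero_or_pos (deg p.1.1) with hz | hz
              · rw [hz] at hh; omega
              · exact hz
            obtain ⟨r, hr⟩ := Finset.card_pos.1 hdpos
            obtain ⟨hrR, hreq⟩ := Finset.mem_filter.1 hr
            exact Finset.mem_image.2 ⟨r, hrR, hreq⟩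
          · intro p hp q hq hpq
            have hp2 := (Finset.mem_filter.1 hp).2
            have hq2 := (Finset.mem_filter.1 hq).2
            obtain ⟨_, hpeq, _⟩ := Finset.mem_filter.1 (Finset.mem_filter.1 hp).1
            obtain ⟨_, hqeq, _⟩ := Finset.mem_filter.1 (Finset.mem_filter.1 hq).1
            have h12 : p.1.2 = q.1.2 := by rw [hpeq, hqeq, hp2, hq2]
            have h1 : p.1 = q.1 := Prod.ext hpq h12
            exact Prod.ext h1 (hp2.trans hq2.symm)
        calc ((Qf.filter (fun p => p.2 = u)).card : ℝ)
            ≤ (Hset.card : ℝ) := by exact_mod_cast hinj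
          _ ≤ sq := hHcard
      calc ((Qf.image (fun p => (p.1.1, p.1.2, p.2.2))).card : ℝ)
          ≤ (Qf.card : ℝ) := by exact_mod_cast Finset.card_image_le
        _ = ∑ u ∈ U, ((Qf.filter (fun p => p.2 = u)).card : ℝ) := by
            rw [h1]; push_cast; ring
        _ ≤ ∑ _u ∈ U, sq := Finset.sum_le_sum h2
        _ = (U.card : ℝ) * sq := by simp [Finset.sum_const, nsmul_eq_mul]
        _ ≤ (N : ℝ) * sq := by
            apply mul_le_mul_of_nonneg_right _ hsq0
            exact_mod_cast hU
    have hpow : (N : ℝ) ^ ((3 : ℝ) / 2) = (N : ℝ) * sq := by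
      rw [show (3 : ℝ) / 2 = 1 + 1 / 2 by norm_num,
        Real.rpow_add' (Nat.cast_nonneg N) (by norm_num), Real.rpow_one,
        hsqdef, Real.sqrt_eq_rpow]
    rw [hpow]
    linarith [hPcard, hQcard]
  · intro x y z w hxy hyz hzw
    by_cases hh : N < deg y * deg y
    · right
      refine Finset.mem_image.2 ⟨((y, z), (z, w)), ?_, rfl⟩
      rw [hQf, Finset.mem_filter, Finset.mem_product]
      exact ⟨⟨hyz, hzw⟩, rfl, hh⟩
    · left
      refine Finset.mem_image.2 ⟨((x, y), (y, z)), ?_, rfl⟩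
      rw [hPf, Finset.mem_filter, Finset.mem_product]
      exact ⟨⟨hxy, hyz⟩, rfl, hh⟩
end

section
/- Let R ⊆ A × B, S ⊆ B × C, T ⊆ A × C be finite relations. Then the number of triangles |{(x,y,z) : (x,y) ∈ R, (y,z) ∈ S, (x,z) ∈ T}| is at most √(|R| · |S| · |T|). -/
open Finset

theorem stmt_13 {A B C : Type*} [Fintype A] [Fintype B] [Fintype C]
    [DecidableEq A] [DecidableEq B] [DecidableEq C]
    (R : Finset (A × B)) (S : Finset (B × C)) (T : Finset (A × C)) :
    ((Finset.univ.filter fun t : A × B × C =>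
        (t.1, t.2.1) ∈ R ∧ (t.2.1, t.2.2) ∈ S ∧ (t.1, t.2.2) ∈ T).card : ℝ) ≤
      Real.sqrt ((R.card : ℝ) * (S.card : ℝ) * (T.card : ℝ)) := by
  classical
  set r : A → B → ℝ := fun x y => if (x, y) ∈ R then 1 else 0 with hr
  set s : B → C → ℝ := fun y z => if (y, z) ∈ S then 1 else 0 with hs
  set t : A → C → ℝ := fun x z => if (x, z) ∈ T then 1 else 0 with ht
  set F : A × B → ℝ := fun p => ∑ z : C, s p.2 z * t p.1 z with hF
  set N : ℝ := ((univ.filter fun p : A × B × C =>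
      (p.1, p.2.1) ∈ R ∧ (p.2.1, p.2.2) ∈ S ∧ (p.1, p.2.2) ∈ T).card : ℝ) with hNdef
  have hN : N = ∑ p : A × B, r p.1 p.2 * F p := by
    rw [hNdef, Finset.card_filter]
    push_cast
    rw [Fintype.sum_prod_type]
    simp only [hF, Fintype.sum_prod_type, Finset.mul_sum]
    refine Finset.sum_congr rfl fun x _ => Finset.sum_congr rfl fun y _ => Finset.sum_congr rfl fun z _ => ?_
    by_cases h1 : (x, y) ∈ R <;> by_cases h2 : (y, z) ∈ S <;> by_cases h3 : (x, z) ∈ T <;>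
      simp [hr, hs, ht, h1, h2, h3]
  have hRsum : ∑ p : A × B, r p.1 p.2 ^ 2 = (R.card : ℝ) := by
    have : ∀ p : A × B, r p.1 p.2 ^ 2 = if p ∈ R then 1 else 0 := by
      intro p
      by_cases h : p ∈ R <;> simp [hr, h]
    rw [Finset.sum_congr rfl fun p _ => this p, Finset.sum_boole, Finset.filter_univ_mem]
  have hSsum : ∀ y, ∑ z : C, s y z ^ 2 = ∑ z : C, s y z := by
    intro y; refine Finset.sum_congr rfl fun z _ => ?_
    by_cases h : (y, z) ∈ S <;> simp [hs, h]
  have hTsum : ∀ x, ∑ z : C, t x z ^ 2 = ∑ z : C, t x z := by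
    intro x; refine Finset.sum_congr rfl fun z _ => ?_
    by_cases h : (x, z) ∈ T <;> simp [ht, h]
  have hS : ∑ y : B, ∑ z : C, s y z = (S.card : ℝ) := by
    rw [← Finset.sum_product', Finset.univ_product_univ]
    have : ∀ p : B × C, s p.1 p.2 = if p ∈ S then 1 else 0 := fun p => by simp [hs]
    rw [Finset.sum_congr rfl fun p _ => this p, Finset.sum_boole, Finset.filter_univ_mem]
  have hT : ∑ x : A, ∑ z : C, t x z = (T.card : ℝ) := by
    rw [← Finset.sum_product', Finset.univ_product_univ]
    have : ∀ p : A × C, t p.1 p.2 = if p ∈ T then 1 else 0 := fun p => by simp [ht]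
    rw [Finset.sum_congr rfl fun p _ => this p, Finset.sum_boole, Finset.filter_univ_mem]
  have hFsq : ∑ p : A × B, F p ^ 2 ≤ (S.card : ℝ) * (T.card : ℝ) := by
    have h1 : ∀ p : A × B, F p ^ 2 ≤ (∑ z : C, s p.2 z) * (∑ z : C, t p.1 z) := by
      intro p
      have := Finset.sum_mul_sq_le_sq_mul_sq univ (fun z => s p.2 z) (fun z => t p.1 z)
      calc F p ^ 2 ≤ (∑ z : C, s p.2 z ^ 2) * ∑ z : C, t p.1 z ^ 2 := this
        _ = (∑ z : C, s p.2 z) * (∑ z : C, t p.1 z) := by rw [hSsum, hTsum]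
    calc ∑ p : A × B, F p ^ 2 ≤ ∑ p : A × B, (∑ z : C, s p.2 z) * (∑ z : C, t p.1 z) :=
          Finset.sum_le_sum fun p _ => h1 p
      _ = (∑ x : A, ∑ z : C, t x z) * (∑ y : B, ∑ z : C, s y z) := by
          rw [Fintype.sum_prod_type, Finset.sum_mul_sum]
          exact Finset.sum_congr rfl fun x _ => Finset.sum_congr rfl fun y _ => mul_comm _ _
      _ = (S.card : ℝ) * (T.card : ℝ) := by rw [hS, hT, mul_comm]
  have hFnn : ∑ p : A × B, F p ^ 2 ≥ 0 := Finset.sum_nonneg fun p _ => sq_nonneg _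
  have hsq : N ^ 2 ≤ (R.card : ℝ) * (S.card : ℝ) * (T.card : ℝ) := by
    have hCS := Finset.sum_mul_sq_le_sq_mul_sq univ (fun p : A × B => r p.1 p.2) F
    calc N ^ 2 = (∑ p : A × B, r p.1 p.2 * F p) ^ 2 := by rw [hN]
      _ ≤ (∑ p : A × B, r p.1 p.2 ^ 2) * ∑ p : A × B, F p ^ 2 := hCS
      _ = (R.card : ℝ) * ∑ p : A × B, F p ^ 2 := by rw [hRsum]
      _ ≤ (R.card : ℝ) * ((S.card : ℝ) * (T.card : ℝ)) :=
          mul_le_mul_of_nonneg_left hFsq (Nat.cast_nonneg _)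
      _ = (R.card : ℝ) * (S.card : ℝ) * (T.card : ℝ) := by ring
  have hN0 : 0 ≤ N := Nat.cast_nonneg _
  calc N = Real.sqrt (N ^ 2) := (Real.sqrt_sq hN0).symm
    _ ≤ Real.sqrt ((R.card : ℝ) * (S.card : ℝ) * (T.card : ℝ)) := Real.sqrt_le_sqrt hsq
end

section
/- Consider the 4-cycle over variables X,Y,Z,W with cardinality constraints h(XY) ≤ n, h(YZ) ≤ n, h(ZW) ≤ n, h(WX) ≤ n for a real n ≥ 0. Then for every polymatroid h on {X,Y,Z,W} satisfying these constraints, min( max(h(XYZ), h(ZWX)), max(h(YZW), h(WXY)) ) ≤ (3/2)·n. -/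
lemma path_ineq (h : Finset (Fin 4) → ℝ) (h0 : h ∅ = 0)
    (sub : ∀ A B : Finset (Fin 4), h (A ∪ B) + h (A ∩ B) ≤ h A + h B)
    (a b c d : Fin 4)
    (e1 : ({a, b} ∪ {b, c} : Finset (Fin 4)) = {a, b, c})
    (e2 : ({a, b} ∩ {b, c} : Finset (Fin 4)) = {b})
    (e3 : ({b, c} ∪ {c, d} : Finset (Fin 4)) = {b, c, d})
    (e4 : ({b, c} ∩ {c, d} : Finset (Fin 4)) = {c})
    (e5 : ({b} ∪ {c} : Finset (Fin 4)) = {b, c})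
    (e6 : ({b} ∩ {c} : Finset (Fin 4)) = ∅) :
    h {a, b, c} + h {b, c, d} ≤ h {a, b} + h {b, c} + h {c, d} := by
  have h1 := sub {a, b} {b, c}; rw [e1, e2] at h1
  have h2 := sub {b, c} {c, d}; rw [e3, e4] at h2
  have h3 := sub {b} {c}; rw [e5, e6, h0] at h3
  linarith

/-- Variables `X, Y, Z, W` of the 4-cycle are `0, 1, 2, 3 : Fin 4`. -/
theorem stmt_16 (n : ℝ) (hn : 0 ≤ n) (h : Finset (Fin 4) → ℝ)
    (hpm : IsPolymatroid h)
    (hXY : h {0, 1} ≤ n) (hYZ : h {1, 2} ≤ n) (hZW : h {2, 3} ≤ n) (hWX : h {3, 0} ≤ n) :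
    min (max (h {0, 1, 2}) (h {2, 3, 0})) (max (h {1, 2, 3}) (h {3, 0, 1}))
      ≤ (3 / 2) * n := by
  obtain ⟨h0, hmono, hsub⟩ := hpm
  have k1 := path_ineq h h0 hsub 0 1 2 3 (by decide) (by decide) (by decide) (by decide)
    (by decide) (by decide)
  have k2 := path_ineq h h0 hsub 3 0 1 2 (by decide) (by decide) (by decide) (by decide)
    (by decide) (by decide)
  have k3 := path_ineq h h0 hsub 1 2 3 0 (by decide) (by decide) (by decide) (by decide)
    (by decide) (by decide)
  have k4 := path_ineq h h0 hsub 2 3 0 1 (by decide) (by decide) (by decide) (by decide)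
    (by decide) (by decide)
  rcases max_cases (h {0, 1, 2}) (h {2, 3, 0}) with ⟨hA, _⟩ | ⟨hA, _⟩ <;>
  rcases max_cases (h {1, 2, 3}) (h {3, 0, 1}) with ⟨hB, _⟩ | ⟨hB, _⟩ <;>
  rcases min_cases (max (h {0, 1, 2}) (h {2, 3, 0})) (max (h {1, 2, 3}) (h {3, 0, 1}))
    with ⟨hm, _⟩ | ⟨hm, _⟩ <;>
  rw [hm] <;> rw [hA] at * <;> rw [hB] at * <;> linarith
end

section
/- Consider the 4-cycle over variables X,Y,Z,W with cardinality constraints h(XY), h(YZ), h(ZW), h(WX) all ≤ n, n ≥ 0. For every tree decomposition of the 4-cycle query (equivalently: for every set family covering all four edges {X,Y},{Y,Z},{Z,W},{W,X} that satisfies the tree-decomposition running intersection property), some bag contains three consecutive cycle variables {X_{i−1}, X_i, X_{i+1}} (indices mod 4), and there exists a polymatroid h satisfying the constraints with h of that bag equal to 2n. Hence the degree-aware fractional hypertree width of the 4-cycle is at least 2n. -/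
open SimpleGraph Walk in
private lemma lastNode {ι : Type*} [DecidableEq ι] {G : SimpleGraph ι} (P : ι → Prop)
    [DecidablePred P]
    {b c : ι} (p : G.Walk b c) (hp : p.IsPath) (hb : ∃ x ∈ p.support, P x) :
    ∃ u, ∃ hu : u ∈ p.support, P u ∧ ∀ x ∈ (p.dropUntil u hu).support, P x → x = u := by
  induction p with
  | nil =>
    obtain ⟨x, hx, hPx⟩ := hb
    simp only [support_nil, List.mem_singleton] at hx
    subst hx
    refine ⟨x, by simp, hPx, ?_⟩
    intro y hy _
    have : y ∈ (Walk.nil : _root_.SimpleGraph.Walk G x x).support :=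
      support_dropUntil_subset _ _ hy
    simpa using this
  | @cons b b' c hadj q ih =>
    by_cases hq : ∃ x ∈ q.support, P x
    · obtain ⟨u, hu, hPu, hlast⟩ := ih hp.of_cons hq
      have hbn : b ∉ q.support := by
        have := hp.support_nodup
        simp only [support_cons, List.nodup_cons] at this
        exact this.1
      have hne : b ≠ u := fun h => hbn (h ▸ hu)
      refine ⟨u, by simp [hu], hPu, ?_⟩
      have : (Walk.cons hadj q).dropUntil u (by simp [hu]) = q.dropUntil u hu := by
        simp [Walk.dropUntil, hne]
      rw [this]
      exact hlast
    · have hPb : P b := by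
        obtain ⟨x, hx, hPx⟩ := hb
        rcases (by simpa using hx : x = b ∨ x ∈ q.support) with rfl | h
        · exact hPx
        · exact absurd ⟨x, h, hPx⟩ hq
      refine ⟨b, by simp, hPb, ?_⟩
      have : (Walk.cons hadj q).dropUntil b (by simp) = Walk.cons hadj q := by
        simp [Walk.dropUntil]
      rw [this]
      intro x hx hPx
      rcases (by simpa using hx : x = b ∨ x ∈ q.support) with rfl | h
      · rfl
      · exact absurd ⟨x, h, hPx⟩ hq

open SimpleGraph Walk in
/-- Key lemma: on a path `p` from `b` to `c`, if `v ∈ χ b`, and there is a node `a`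
with `v, w ∈ χ a` and `w ∈ χ c`, then some node of `p` contains both `v` and `w`. -/
private lemma keyLemma {ι : Type*} [DecidableEq ι] {G : SimpleGraph ι} (hG : G.IsTree)
    (χ : ι → Finset (Fin 4))
    (hri : ∀ (v : Fin 4) (i j k : ι) (p : G.Walk i j), p.IsPath →
      v ∈ χ i → v ∈ χ j → k ∈ p.support → v ∈ χ k)
    (v w : Fin 4) {a b c : ι} (p : G.Walk b c) (hp : p.IsPath)
    (hvb : v ∈ χ b) (hva : v ∈ χ a) (hwa : w ∈ χ a) (hwc : w ∈ χ c) :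
    ∃ u ∈ p.support, v ∈ χ u ∧ w ∈ χ u := by
  obtain ⟨u, hu, hvu, hlast⟩ :=
    lastNode (fun x => v ∈ χ x) p hp ⟨b, p.start_mem_support, hvb⟩
  obtain ⟨q0⟩ := hG.isConnected a u
  have hqp : q0.bypass.IsPath := q0.bypass_isPath
  set q := q0.bypass with hqdef
  have hqv : ∀ x ∈ q.support, v ∈ χ x := fun x hx => hri v a u x q hqp hva hvu hx
  set s := p.dropUntil u hu with hsdef
  have hsp : s.IsPath := hp.dropUntil hu
  have hunotail : u ∉ s.support.tail := by
    have hnd := hsp.support_nodup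
    rw [s.support_eq_cons] at hnd
    exact (List.nodup_cons.mp hnd).1
  have happ : (q.append s).IsPath := by
    rw [Walk.isPath_def, Walk.support_append]
    refine List.Nodup.append hqp.support_nodup ?_ ?_
    · exact hsp.support_nodup.tail
    · intro x hx hx'
      have hvx : v ∈ χ x := hqv x hx
      have hxs : x ∈ s.support := List.mem_of_mem_tail hx'
      have : x = u := hlast x hxs hvx
      exact hunotail (this ▸ hx')
  have hus : u ∈ (q.append s).support := by
    rw [Walk.mem_support_append_iff]
    exact Or.inl q.end_mem_support
  exact ⟨u, hu, hvu, hri w a c u (q.append s) happ hwa hwc hus⟩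

private lemma polyAux (n : ℝ) (hn : 0 ≤ n) (D : Finset (Fin 4)) :
    IsPolymatroid (fun S => ((S ∩ D).card : ℝ) * n) := by
  refine ⟨by simp, ?_, ?_⟩
  · intro A B hAB
    have : (A ∩ D).card ≤ (B ∩ D).card :=
      Finset.card_le_card (Finset.inter_subset_inter hAB (Finset.Subset.refl D))
    exact mul_le_mul_of_nonneg_right (by exact_mod_cast this) hn
  · intro A B
    have h1 : ((A ∪ B) ∩ D).card + ((A ∩ B) ∩ D).card = (A ∩ D).card + (B ∩ D).card := by
      rw [Finset.union_inter_distrib_right, Finset.inter_inter_distrib_right,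
        Finset.card_union_add_card_inter]
    apply le_of_eq
    rw [← add_mul, ← add_mul, ← Nat.cast_add, ← Nat.cast_add, h1]

/-- The 4-cycle has variables `0, 1, 2, 3 : Fin 4` and edges `{a, a+1}` for `a : Fin 4`.
A tree decomposition is given by a tree `G` on a nonempty node type `ι`, with bags
`χ : ι → Finset (Fin 4)`, covering every edge, and satisfying the running
intersection property (bags containing any fixed variable are connected). -/
theorem stmt_17 (n : ℝ) (hn : 0 ≤ n) {ι : Type*} [Nonempty ι]
    (G : SimpleGraph ι) (hG : G.IsTree) (χ : ι → Finset (Fin 4))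
    (hcover : ∀ a : Fin 4, ∃ i : ι, ({a, a + 1} : Finset (Fin 4)) ⊆ χ i)
    (hri : ∀ (v : Fin 4) (i j k : ι) (p : G.Walk i j), p.IsPath →
      v ∈ χ i → v ∈ χ j → k ∈ p.support → v ∈ χ k) :
    ∃ (i : ι) (a : Fin 4), ({a - 1, a, a + 1} : Finset (Fin 4)) ⊆ χ i ∧
      ∃ h : Finset (Fin 4) → ℝ, IsPolymatroid h ∧
        h {0, 1} ≤ n ∧ h {1, 2} ≤ n ∧ h {2, 3} ≤ n ∧ h {3, 0} ≤ n ∧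
        h (χ i) = 2 * n := by
  classical
  obtain ⟨i0, h0⟩ := hcover 0
  obtain ⟨i1, h1⟩ := hcover 1
  obtain ⟨i2, h2⟩ := hcover 2
  obtain ⟨i3, h3⟩ := hcover 3
  have m00 : (0 : Fin 4) ∈ χ i0 := h0 (by decide)
  have m01 : (1 : Fin 4) ∈ χ i0 := h0 (by decide)
  have m11 : (1 : Fin 4) ∈ χ i1 := h1 (by decide)
  have m12 : (2 : Fin 4) ∈ χ i1 := h1 (by decide)
  have m22 : (2 : Fin 4) ∈ χ i2 := h2 (by decide)
  have m23 : (3 : Fin 4) ∈ χ i2 := h2 (by decide)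
  have m33 : (3 : Fin 4) ∈ χ i3 := h3 (by decide)
  have m30 : (0 : Fin 4) ∈ χ i3 := h3 (by decide)
  -- First find a node whose bag contains three consecutive variables
  have main : ∃ (i : ι) (a : Fin 4), (a-1) ∈ χ i ∧ a ∈ χ i ∧ (a+1) ∈ χ i := by
    by_cases hA : ∃ k, (0 : Fin 4) ∈ χ k ∧ (2 : Fin 4) ∈ χ k
    · obtain ⟨k, hk0, hk2⟩ := hA
      obtain ⟨w0⟩ := hG.isConnected i0 k
      obtain ⟨u, hu, h1u, h2u⟩ :=
        keyLemma hG χ hri 1 2 w0.bypass w0.bypass_isPath m01 m11 m12 hk2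
      have h0u : (0 : Fin 4) ∈ χ u := hri 0 i0 k u w0.bypass w0.bypass_isPath m00 hk0 hu
      exact ⟨u, 1, by simpa using h0u, h1u, by simpa using h2u⟩
    · by_cases hB : ∃ k, (1 : Fin 4) ∈ χ k ∧ (3 : Fin 4) ∈ χ k
      · obtain ⟨k, hk1, hk3⟩ := hB
        obtain ⟨w0⟩ := hG.isConnected i1 k
        obtain ⟨u, hu, h2u, h3u⟩ :=
          keyLemma hG χ hri 2 3 w0.bypass w0.bypass_isPath m12 m22 m23 hk3
        have h1u : (1 : Fin 4) ∈ χ u := hri 1 i1 k u w0.bypass w0.bypass_isPath m11 hk1 hu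
        exact ⟨u, 2, by simpa using h1u, h2u, by simpa using h3u⟩
      · exfalso
        obtain ⟨w0⟩ := hG.isConnected i0 i2
        obtain ⟨u, hu, h1u, h2u⟩ :=
          keyLemma hG χ hri 1 2 w0.bypass w0.bypass_isPath m01 m11 m12 m22
        have h0u : (0 : Fin 4) ∉ χ u := fun h => hA ⟨u, h, h2u⟩
        have h3u : (3 : Fin 4) ∉ χ u := fun h => hB ⟨u, h1u, h⟩
        obtain ⟨wa⟩ := hG.isConnected i0 i3
        obtain ⟨wb⟩ := hG.isConnected i3 i2
        have hq1 : ∀ x ∈ wa.bypass.support, (0 : Fin 4) ∈ χ x :=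
          fun x hx => hri 0 i0 i3 x wa.bypass wa.bypass_isPath m00 m30 hx
        have hq2 : ∀ x ∈ wb.bypass.support, (3 : Fin 4) ∈ χ x :=
          fun x hx => hri 3 i3 i2 x wb.bypass wb.bypass_isPath m33 m23 hx
        have hpeq : w0.bypass = (wa.bypass.append wb.bypass).bypass := by
          have := hG.IsAcyclic.path_unique
            ⟨w0.bypass, w0.bypass_isPath⟩
            ⟨(wa.bypass.append wb.bypass).bypass, (wa.bypass.append wb.bypass).bypass_isPath⟩
          exact congrArg Subtype.val this
        have hu' : u ∈ (wa.bypass.append wb.bypass).support :=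
          (wa.bypass.append wb.bypass).support_bypass_subset (hpeq ▸ hu)
        rw [SimpleGraph.Walk.mem_support_append_iff] at hu'
        rcases hu' with h | h
        · exact h0u (hq1 u h)
        · exact h3u (hq2 u h)
  have c01 : ∀ b : Fin 4, (({0, 1} : Finset (Fin 4)) ∩ {b - 1, b + 1}).card ≤ 1 := by decide
  have c12 : ∀ b : Fin 4, (({1, 2} : Finset (Fin 4)) ∩ {b - 1, b + 1}).card ≤ 1 := by decide
  have c23 : ∀ b : Fin 4, (({2, 3} : Finset (Fin 4)) ∩ {b - 1, b + 1}).card ≤ 1 := by decide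
  have c30 : ∀ b : Fin 4, (({3, 0} : Finset (Fin 4)) ∩ {b - 1, b + 1}).card ≤ 1 := by decide
  have c2 : ∀ b : Fin 4, ({b - 1, b + 1} : Finset (Fin 4)).card = 2 := by decide
  obtain ⟨i, a, ham, ha, hap⟩ := main
  refine ⟨i, a, ?_, fun S => ((S ∩ ({a - 1, a + 1} : Finset (Fin 4))).card : ℝ) * n,
    polyAux n hn _, ?_, ?_, ?_, ?_, ?_⟩
  · intro x hx
    simp only [Finset.mem_insert, Finset.mem_singleton] at hx
    rcases hx with rfl | rfl | rfl
    · exact ham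
    · exact ha
    · exact hap
  · have := c01 a
    calc ((({0, 1} : Finset (Fin 4)) ∩ {a - 1, a + 1}).card : ℝ) * n
        ≤ 1 * n := mul_le_mul_of_nonneg_right (by exact_mod_cast this) hn
      _ = n := one_mul n
  · have := c12 a
    calc ((({1, 2} : Finset (Fin 4)) ∩ {a - 1, a + 1}).card : ℝ) * n
        ≤ 1 * n := mul_le_mul_of_nonneg_right (by exact_mod_cast this) hn
      _ = n := one_mul n
  · have := c23 a
    calc ((({2, 3} : Finset (Fin 4)) ∩ {a - 1, a + 1}).card : ℝ) * n
        ≤ 1 * n := mul_le_mul_of_nonneg_right (by exact_mod_cast this) hn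
      _ = n := one_mul n
  · have := c30 a
    calc ((({3, 0} : Finset (Fin 4)) ∩ {a - 1, a + 1}).card : ℝ) * n
        ≤ 1 * n := mul_le_mul_of_nonneg_right (by exact_mod_cast this) hn
      _ = n := one_mul n
  · have hsub : ({a - 1, a + 1} : Finset (Fin 4)) ⊆ χ i := by
      intro x hx
      simp only [Finset.mem_insert, Finset.mem_singleton] at hx
      rcases hx with rfl | rfl
      · exact ham
      · exact hap
    show ((χ i ∩ ({a - 1, a + 1} : Finset (Fin 4))).card : ℝ) * n = 2 * n
    rw [Finset.inter_eq_right.mpr hsub, c2 a]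
    push_cast
    ring
end

section
/- Let Σ_in be a finite set of finite relations over variables V, and suppose λ : Σ_out → ℝ≥0 with Σ λ = 1 and w : Δ → ℝ≥0 satisfy: Σ_{Z ∈ Σ_out} λ_Z h(Z) ≤ Σ_{δ ∈ Δ} w_δ h(δ) for every entropic vector h of a joint distribution on V with finite support. Then there exists a model Σ_out of the disjunctive datalog rule (an assignment of a finite relation Q_Z over variables Z to each Z ∈ Σ_out such that every tuple t in the full join of Σ_in has π_Z(t) ∈ Q_Z for some Z) whose total size Σ_Z |Q_Z| is at most |Σ_out| · Π_{δ ∈ Δ} deg_{Σ_in}(δ)^{w_δ}. -/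
/-- Projection of a full tuple onto a set of variables, as a partial tuple. -/
def proj {V Dom : Type*} [DecidableEq V] (S : Finset V) (t : V → Dom) : V → Option Dom :=
  fun v => if v ∈ S then some (t v) else none

/-- Projection of a partial tuple onto a set of variables. -/
def projP {V Dom : Type*} [DecidableEq V] (S : Finset V) (r : V → Option Dom) :
    V → Option Dom :=
  fun v => if v ∈ S then r v else none

/-- `deg_R(Y|X)`: the maximum, over partial `X`-tuples `x`, of the number of distinct
`Y`-projections of tuples of `R` whose `X`-projection is `x`. -/
def degRel {V Dom : Type*} [Fintype V] [DecidableEq V] [DecidableEq Dom]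
    (R : Finset (V → Option Dom)) (X Y : Finset V) : ℕ :=
  (R.image (projP X)).sup fun x =>
    ((R.filter fun r => projP X r = x).image (projP Y)).card

/-- The entropy of the marginal on `S` of a finitely supported distribution `(F, p)`
on tuples. -/
noncomputable def marginalEntropy {V Dom : Type*} [Fintype V] [DecidableEq V]
    [DecidableEq Dom] (F : Finset (V → Dom)) (p : (V → Dom) → ℝ) (S : Finset V) : ℝ :=
  -∑ x ∈ F.image (proj S),
      (∑ t ∈ F.filter fun t => proj S t = x, p t) *
        Real.log (∑ t ∈ F.filter fun t => proj S t = x, p t)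

/-- `h` is the entropic vector of some finitely supported joint distribution on the
variables `V` with values in `Dom`. -/
def IsEntropic {V : Type*} (Dom : Type*) [Fintype V] [DecidableEq V] [DecidableEq Dom]
    (h : Finset V → ℝ) : Prop :=
  ∃ (F : Finset (V → Dom)) (p : (V → Dom) → ℝ),
    (∀ t ∈ F, 0 < p t) ∧ (∑ t ∈ F, p t) = 1 ∧
    ∀ S : Finset V, h S = marginalEntropy F p S

section Helpers
open Finset Real
set_option linter.unusedSectionVars false

variable {V Dom : Type*} [Fintype V] [DecidableEq V] [DecidableEq Dom]

lemma projP_proj (X S : Finset V) (hXS : X ⊆ S) (t : V → Dom) :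
    projP X (proj S t) = proj X t := by
  funext v
  by_cases h : v ∈ X
  · simp [projP, proj, h, hXS h]
  · simp [projP, proj, h]

/-- Jensen / log-sum inequality. -/
lemma jensen_log {α : Type*} (A : Finset α) (hA : A.Nonempty) (m : α → ℝ)
    (hm : ∀ z ∈ A, 0 < m z) :
    (∑ z ∈ A, m z) * Real.log (∑ z ∈ A, m z) - ∑ z ∈ A, m z * Real.log (m z)
      ≤ (∑ z ∈ A, m z) * Real.log A.card := by
  set n : ℝ := ∑ z ∈ A, m z with hn
  have hn0 : 0 < n := Finset.sum_pos hm hA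
  have key : ∑ z ∈ A, (m z / n) • Real.log (n / m z) ≤
      Real.log (∑ z ∈ A, (m z / n) • (n / m z)) := by
    apply (strictConcaveOn_log_Ioi.concaveOn).le_map_sum
    · intro z hz; exact div_nonneg (hm z hz).le hn0.le
    · rw [← Finset.sum_div]; field_simp; exact hn.symm
    · intro z hz
      exact Set.mem_Ioi.mpr (div_pos hn0 (hm z hz))
  have hsum1 : ∑ z ∈ A, (m z / n) • (n / m z) = (A.card : ℝ) := by
    rw [Finset.sum_congr rfl (fun z hz => ?_), Finset.sum_const, nsmul_eq_mul, mul_one]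
    have := (hm z hz).ne'
    rw [smul_eq_mul, div_mul_div_comm, mul_comm (m z) n, div_self (mul_ne_zero hn0.ne' this)]
  rw [hsum1] at key
  have hlhs : n * ∑ z ∈ A, (m z / n) • Real.log (n / m z)
      = n * Real.log n - ∑ z ∈ A, m z * Real.log (m z) := by
    rw [Finset.mul_sum]
    have hterm : ∀ z ∈ A, n * ((m z / n) • Real.log (n / m z))
        = m z * Real.log n - m z * Real.log (m z) := by
      intro z hz
      rw [smul_eq_mul, Real.log_div hn0.ne' (hm z hz).ne']
      field_simp
    rw [Finset.sum_congr rfl hterm, Finset.sum_sub_distrib, ← Finset.sum_mul, ← hn]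
  have := mul_le_mul_of_nonneg_left key hn0.le
  rw [hlhs] at this
  linarith

lemma marginalEntropy_uniform (T : Finset (V → Dom)) (hT : T.Nonempty) (S : Finset V) :
    marginalEntropy T (fun _ => ((T.card : ℝ))⁻¹) S =
      Real.log T.card - (T.card : ℝ)⁻¹ *
        ∑ x ∈ T.image (proj S), ((T.filter fun t => proj S t = x).card : ℝ) *
          Real.log ((T.filter fun t => proj S t = x).card) := by
  have hN : (0 : ℝ) < T.card := by exact_mod_cast Finset.card_pos.mpr hT
  unfold marginalEntropy
  have hconst : ∀ x, (∑ t ∈ T.filter fun t => proj S t = x, ((T.card : ℝ))⁻¹)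
      = ((T.filter fun t => proj S t = x).card : ℝ) * (T.card : ℝ)⁻¹ := by
    intro x; rw [Finset.sum_const, nsmul_eq_mul]
  have hNsum : ∑ x ∈ T.image (proj S), ((T.filter fun t => proj S t = x).card : ℝ)
      = (T.card : ℝ) := by
    exact_mod_cast (Finset.card_eq_sum_card_image (proj S) T).symm
  calc -∑ x ∈ T.image (proj S),
        (∑ t ∈ T.filter fun t => proj S t = x, ((T.card : ℝ))⁻¹) *
          Real.log (∑ t ∈ T.filter fun t => proj S t = x, ((T.card : ℝ))⁻¹)
      = -∑ x ∈ T.image (proj S),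
          (((T.filter fun t => proj S t = x).card : ℝ) * (T.card : ℝ)⁻¹ *
            (Real.log ((T.filter fun t => proj S t = x).card) - Real.log (T.card))) := by
        rw [neg_inj]
        refine Finset.sum_congr rfl fun x hx => ?_
        rw [hconst]
        obtain ⟨t0, ht0, ht0x⟩ := Finset.mem_image.mp hx
        have hpos : (0:ℝ) < ((T.filter fun t => proj S t = x).card : ℝ) := by
          have : t0 ∈ T.filter fun t => proj S t = x := Finset.mem_filter.mpr ⟨ht0, ht0x⟩
          exact_mod_cast Finset.card_pos.mpr ⟨t0, this⟩
        rw [Real.log_mul hpos.ne' (inv_ne_zero hN.ne'), Real.log_inv]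
        ring
    _ = Real.log T.card - (T.card : ℝ)⁻¹ *
        ∑ x ∈ T.image (proj S), ((T.filter fun t => proj S t = x).card : ℝ) *
          Real.log ((T.filter fun t => proj S t = x).card) := by
        rw [Finset.mul_sum]
        rw [← Finset.sum_neg_distrib]
        rw [Finset.sum_congr rfl (fun x _ => by ring :
          ∀ x ∈ T.image (proj S), -(((T.filter fun t => proj S t = x).card : ℝ) * (T.card : ℝ)⁻¹ *
            (Real.log ((T.filter fun t => proj S t = x).card) - Real.log (T.card)))
          = ((T.filter fun t => proj S t = x).card : ℝ) * (Real.log (T.card) * (T.card : ℝ)⁻¹)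
            - (T.card:ℝ)⁻¹ * (((T.filter fun t => proj S t = x).card : ℝ) *
              Real.log ((T.filter fun t => proj S t = x).card)))]
        rw [Finset.sum_sub_distrib, ← Finset.sum_mul, hNsum, ← Finset.mul_sum]
        field_simp

lemma marginalEntropy_uniform_inj (T : Finset (V → Dom)) (hT : T.Nonempty) (S : Finset V)
    (hinj : Set.InjOn (proj S) (T : Set (V → Dom))) :
    marginalEntropy T (fun _ => ((T.card : ℝ))⁻¹) S = Real.log T.card := by
  rw [marginalEntropy_uniform T hT S]
  have : ∀ x ∈ T.image (proj S), ((T.filter fun t => proj S t = x).card : ℝ) *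
      Real.log ((T.filter fun t => proj S t = x).card) = 0 := by
    intro x hx
    obtain ⟨t0, ht0, ht0x⟩ := Finset.mem_image.mp hx
    have : (T.filter fun t => proj S t = x) = {t0} := by
      ext t
      simp only [Finset.mem_filter, Finset.mem_singleton]
      constructor
      · rintro ⟨htT, htx⟩; exact hinj (Finset.mem_coe.mpr htT) (Finset.mem_coe.mpr ht0) (htx.trans ht0x.symm)
      · rintro rfl; exact ⟨ht0, ht0x⟩
    rw [this]
    simp
  rw [Finset.sum_congr rfl this]
  simp
end Helpers

section Cond
open Finset Real

variable {V Dom : Type*} [Fintype V] [DecidableEq V] [DecidableEq Dom]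

lemma one_le_degRel (Ri : Finset (V → Option Dom)) (X Y : Finset V) (hRi : Ri.Nonempty) :
    1 ≤ degRel Ri X Y := by
  obtain ⟨r, hr⟩ := hRi
  have hx : projP X r ∈ Ri.image (projP X) := Finset.mem_image_of_mem _ hr
  have h1 : 1 ≤ ((Ri.filter fun r' => projP X r' = projP X r).image (projP Y)).card := by
    refine Finset.card_pos.mpr ⟨projP Y r, Finset.mem_image_of_mem _ ?_⟩
    exact Finset.mem_filter.mpr ⟨hr, rfl⟩
  refine le_trans h1 ?_
  unfold degRel
  exact Finset.le_sup (f := fun x => ((Ri.filter fun r' => projP X r' = x).image (projP Y)).card) hx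

lemma cond_entropy_le (T : Finset (V → Dom)) (hT : T.Nonempty) (X Y : Finset V)
    (Ri : Finset (V → Option Dom)) (W : Finset V) (hYW : Y ⊆ W)
    (hmem : ∀ t ∈ T, proj W t ∈ Ri) :
    marginalEntropy T (fun _ => ((T.card : ℝ))⁻¹) (X ∪ Y) -
      marginalEntropy T (fun _ => ((T.card : ℝ))⁻¹) X ≤
        Real.log (degRel Ri X Y) := by
  classical
  obtain ⟨t₁, ht₁⟩ := hT
  have hRi : Ri.Nonempty := ⟨proj W t₁, hmem t₁ ht₁⟩
  set D := degRel Ri X Y with hD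
  have hD1 : (1:ℝ) ≤ (D:ℝ) := by exact_mod_cast one_le_degRel Ri X Y hRi
  have hN : (0:ℝ) < (T.card : ℝ) := by exact_mod_cast Finset.card_pos.mpr ⟨t₁, ht₁⟩
  set nX : (V → Option Dom) → ℝ := fun x => ((T.filter fun t => proj X t = x).card : ℝ) with hnX
  set nXY : (V → Option Dom) → ℝ :=
    fun z => ((T.filter fun t => proj (X ∪ Y) t = z).card : ℝ) with hnXY
  set A : (V → Option Dom) → Finset (V → Option Dom) :=
    fun x => (T.image (proj (X ∪ Y))).filter (fun z => projP X z = x) with hA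
  -- basic facts
  have hproj : ∀ t : V → Dom, projP X (proj (X ∪ Y) t) = proj X t :=
    fun t => projP_proj X (X ∪ Y) Finset.subset_union_left t
  have hmaps : ∀ z ∈ T.image (proj (X ∪ Y)), projP X z ∈ T.image (proj X) := by
    intro z hz
    obtain ⟨t, htT, rfl⟩ := Finset.mem_image.mp hz
    rw [hproj]
    exact Finset.mem_image_of_mem _ htT
  have hgroup : ∑ x ∈ T.image (proj X), ∑ z ∈ A x, nXY z * Real.log (nXY z)
      = ∑ z ∈ T.image (proj (X ∪ Y)), nXY z * Real.log (nXY z) :=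
    Finset.sum_fiberwise_of_maps_to hmaps _
  have hfib : ∀ x ∈ T.image (proj X), ∑ z ∈ A x, nXY z = nX x := by
    intro x hx
    have hc : (T.filter fun t => proj X t = x).card
        = ∑ z ∈ A x, ((T.filter fun t => proj X t = x).filter
            fun t => proj (X ∪ Y) t = z).card := by
      apply Finset.card_eq_sum_card_fiberwise
      intro t ht
      rw [Finset.mem_coe, Finset.mem_filter] at ht
      exact Finset.mem_filter.mpr ⟨Finset.mem_image_of_mem _ ht.1, by rw [hproj]; exact ht.2⟩
    have hc2 : ∀ z ∈ A x, ((T.filter fun t => proj X t = x).filter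
        fun t => proj (X ∪ Y) t = z) = T.filter fun t => proj (X ∪ Y) t = z := by
      intro z hz
      rw [Finset.mem_filter] at hz
      rw [Finset.filter_filter]
      apply Finset.filter_congr
      intro t htT
      constructor
      · rintro ⟨_, h⟩; exact h
      · rintro h; exact ⟨by rw [← hz.2, ← h, hproj], h⟩
    rw [hnX, hnXY]
    push_cast
    rw [hc]
    push_cast
    exact Finset.sum_congr rfl fun z hz => by rw [hc2 z hz]
  have hApos : ∀ x, ∀ z ∈ A x, 0 < nXY z := by
    intro x z hz
    rw [hA, Finset.mem_filter] at hz
    obtain ⟨t, htT, htz⟩ := Finset.mem_image.mp hz.1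
    have : t ∈ T.filter fun t => proj (X ∪ Y) t = z := Finset.mem_filter.mpr ⟨htT, htz⟩
    show (0:ℝ) < ((T.filter fun t => proj (X ∪ Y) t = z).card : ℝ)
    exact_mod_cast Finset.card_pos.mpr ⟨t, this⟩
  have hAne : ∀ x ∈ T.image (proj X), (A x).Nonempty := by
    intro x hx
    obtain ⟨t, htT, htx⟩ := Finset.mem_image.mp hx
    exact ⟨proj (X ∪ Y) t, Finset.mem_filter.mpr
      ⟨Finset.mem_image_of_mem _ htT, by rw [hproj, htx]⟩⟩
  -- cardinality of the groups is at most D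
  have hk : ∀ x ∈ T.image (proj X), (A x).card ≤ D := by
    intro x hx
    obtain ⟨t₀, ht₀T, ht₀x⟩ := Finset.mem_image.mp hx
    set x' : V → Option Dom := projP X (projP W x) with hx'
    have hxr : ∀ t : V → Dom, t ∈ T → proj X t = x → projP X (proj W t) = x' := by
      intro t htT htx
      funext v
      by_cases hv : v ∈ X
      · have hxv : x v = some (t v) := by rw [← htx]; simp [proj, hv]
        by_cases hw : v ∈ W <;> simp [hx', projP, proj, hv, hw, hxv]
      · simp [hx', projP, hv]
    have hinj : Set.InjOn (projP Y) (A x : Set (V → Option Dom)) := by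
      intro z hz z' hz' hzz'
      rw [Finset.mem_coe, hA, Finset.mem_filter] at hz hz'
      obtain ⟨t, htT, htz⟩ := Finset.mem_image.mp hz.1
      obtain ⟨t', ht'T, htz'⟩ := Finset.mem_image.mp hz'.1
      funext v
      by_cases hvX : v ∈ X
      · have e1 : z v = x v := by rw [← hz.2]; simp [projP, hvX]
        have e2 : z' v = x v := by rw [← hz'.2]; simp [projP, hvX]
        rw [e1, e2]
      · by_cases hvY : v ∈ Y
        · have e1 : z v = projP Y z v := by simp [projP, hvY]
          have e2 : z' v = projP Y z' v := by simp [projP, hvY]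
          rw [e1, e2, hzz']
        · have e1 : z v = none := by rw [← htz]; simp [proj, hvX, hvY]
          have e2 : z' v = none := by rw [← htz']; simp [proj, hvX, hvY]
          rw [e1, e2]
    have hsub : (A x).image (projP Y) ⊆
        (Ri.filter fun r => projP X r = x').image (projP Y) := by
      intro y hy
      obtain ⟨z, hz, rfl⟩ := Finset.mem_image.mp hy
      rw [hA, Finset.mem_filter] at hz
      obtain ⟨t, htT, htz⟩ := Finset.mem_image.mp hz.1
      have htx : proj X t = x := by rw [← hz.2, ← htz, hproj]
      have h1 : projP Y z = projP Y (proj W t) := by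
        rw [← htz, projP_proj Y (X ∪ Y) Finset.subset_union_right,
          projP_proj Y W hYW]
      rw [h1]
      exact Finset.mem_image_of_mem _ (Finset.mem_filter.mpr ⟨hmem t htT, hxr t htT htx⟩)
    have hx'mem : x' ∈ Ri.image (projP X) := by
      rw [← hxr t₀ ht₀T ht₀x]
      exact Finset.mem_image_of_mem _ (hmem t₀ ht₀T)
    calc (A x).card = ((A x).image (projP Y)).card := (Finset.card_image_of_injOn hinj).symm
      _ ≤ ((Ri.filter fun r => projP X r = x').image (projP Y)).card := Finset.card_le_card hsub
      _ ≤ D := by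
          rw [hD]
          unfold degRel
          exact Finset.le_sup
            (f := fun u => ((Ri.filter fun r => projP X r = u).image (projP Y)).card) hx'mem
  -- per-group Jensen bound
  have hperx : ∀ x ∈ T.image (proj X),
      nX x * Real.log (nX x) ≤ (∑ z ∈ A x, nXY z * Real.log (nXY z)) + nX x * Real.log D := by
    intro x hx
    have hj := jensen_log (A x) (hAne x hx) nXY (hApos x)
    rw [hfib x hx] at hj
    have hklog : Real.log ((A x).card) ≤ Real.log D := by
      apply Real.log_le_log
      · exact_mod_cast Finset.card_pos.mpr (hAne x hx)
      · exact_mod_cast hk x hx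
    have hnx0 : (0:ℝ) ≤ nX x := by rw [hnX]; positivity
    nlinarith [mul_le_mul_of_nonneg_left hklog hnx0]
  -- assemble
  have hNsum : ∑ x ∈ T.image (proj X), nX x = (T.card : ℝ) := by
    rw [hnX]
    show ∑ x ∈ T.image (proj X), ((T.filter fun t => proj X t = x).card : ℝ) = (T.card : ℝ)
    exact_mod_cast (Finset.card_eq_sum_card_image (proj X) T).symm
  have hmain : ∑ x ∈ T.image (proj X), nX x * Real.log (nX x)
      ≤ (∑ z ∈ T.image (proj (X ∪ Y)), nXY z * Real.log (nXY z))
        + (T.card : ℝ) * Real.log D := by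
    calc ∑ x ∈ T.image (proj X), nX x * Real.log (nX x)
        ≤ ∑ x ∈ T.image (proj X),
            ((∑ z ∈ A x, nXY z * Real.log (nXY z)) + nX x * Real.log D) :=
          Finset.sum_le_sum hperx
      _ = (∑ x ∈ T.image (proj X), ∑ z ∈ A x, nXY z * Real.log (nXY z))
            + (∑ x ∈ T.image (proj X), nX x) * Real.log D := by
          rw [Finset.sum_add_distrib, Finset.sum_mul]
      _ = (∑ z ∈ T.image (proj (X ∪ Y)), nXY z * Real.log (nXY z))
            + (T.card : ℝ) * Real.log D := by rw [hgroup, hNsum]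
  rw [marginalEntropy_uniform T ⟨t₁, ht₁⟩ (X ∪ Y), marginalEntropy_uniform T ⟨t₁, ht₁⟩ X]
  have hfin : ((T.card : ℝ))⁻¹ * (T.card : ℝ) = 1 := inv_mul_cancel₀ hN.ne'
  have h2 := mul_le_mul_of_nonneg_left hmain (inv_nonneg.mpr hN.le)
  rw [mul_add, ← mul_assoc, hfin, one_mul] at h2
  linarith
end Cond

/-- A degree constraint `δ = (Y|X)` is encoded as the pair `(X, Y)` (condition first).
The input schema is indexed by `ι` with variable sets `vars` and relations `R`;
the output schema is indexed by `ιout` with variable sets `Zvars`. -/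
theorem stmt_19 {V Dom : Type*} [Fintype V] [DecidableEq V] [DecidableEq Dom]
    {ι ιout : Type*} [Fintype ι] [Fintype ιout]
    (vars : ι → Finset V) (R : ι → Finset (V → Option Dom))
    (hR : ∀ i, ∀ r ∈ R i, ∃ t : V → Dom, r = proj (vars i) t)
    (Zvars : ιout → Finset V)
    (Δ : Finset (Finset V × Finset V)) (hΔ : ∀ δ ∈ Δ, Disjoint δ.1 δ.2)
    (hguard : ∀ δ ∈ Δ, ∃ i : ι, δ.2 ⊆ vars i)
    (lam : ιout → ℝ) (hlam0 : ∀ o, 0 ≤ lam o) (hlam1 : ∑ o : ιout, lam o = 1)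
    (w : Finset V × Finset V → ℝ) (hw : ∀ δ ∈ Δ, 0 ≤ w δ)
    (hineq : ∀ h : Finset V → ℝ, IsEntropic Dom h →
      ∑ o : ιout, lam o * h (Zvars o) ≤
        ∑ δ ∈ Δ, w δ * (h (δ.1 ∪ δ.2) - h δ.1)) :
    ∃ Q : ιout → Finset (V → Option Dom),
      (∀ t : V → Dom, (∀ i, proj (vars i) t ∈ R i) →
        ∃ o : ιout, proj (Zvars o) t ∈ Q o) ∧
      (∑ o : ιout, ((Q o).card : ℝ)) ≤ (Fintype.card ιout : ℝ) *
        ∏ δ ∈ Δ,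
          ((sInf {d : ℕ | ∃ i : ι, δ.2 ⊆ vars i ∧ d = degRel (R i) δ.1 δ.2} : ℕ) : ℝ)
            ^ (w δ) := by
  classical
  have hιne : Nonempty ιout := by
    by_contra h
    rw [not_nonempty_iff] at h
    rw [Finset.univ_eq_empty, Finset.sum_empty] at hlam1
    exact one_ne_zero hlam1.symm
  obtain ⟨o₀⟩ := hιne
  set B : ℝ := ∏ δ ∈ Δ,
      ((sInf {d : ℕ | ∃ i : ι, δ.2 ⊆ vars i ∧ d = degRel (R i) δ.1 δ.2} : ℕ) : ℝ) ^ (w δ)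
    with hB
  have hB0 : 0 ≤ B :=
    Finset.prod_nonneg fun δ _ => Real.rpow_nonneg (Nat.cast_nonneg _) _
  set Good : Finset (V → Dom) → Prop := fun T =>
    (∀ t ∈ T, ∀ i, proj (vars i) t ∈ R i) ∧
    ∀ o : ιout, Set.InjOn (proj (Zvars o)) (T : Set (V → Dom)) with hGood
  -- the entropy argument: every Good set has size at most B
  have key : ∀ T : Finset (V → Dom), Good T → (T.card : ℝ) ≤ B := by
    intro T hGT
    rcases T.eq_empty_or_nonempty with rfl | hT
    · simpa using hB0
    have hN : (0:ℝ) < T.card := by exact_mod_cast Finset.card_pos.mpr hT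
    have hEnt : IsEntropic Dom (fun S => marginalEntropy T (fun _ => (T.card:ℝ)⁻¹) S) := by
      refine ⟨T, fun _ => (T.card:ℝ)⁻¹, fun t _ => inv_pos.mpr hN, ?_, fun S => rfl⟩
      rw [Finset.sum_const, nsmul_eq_mul, mul_inv_cancel₀ hN.ne']
    have hin := hineq _ hEnt
    have hLHS : ∑ o : ιout, lam o * marginalEntropy T (fun _ => (T.card:ℝ)⁻¹) (Zvars o)
        = Real.log T.card := by
      rw [Finset.sum_congr rfl
        (fun o _ => by rw [marginalEntropy_uniform_inj T hT _ (hGT.2 o)]),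
        ← Finset.sum_mul, hlam1, one_mul]
    have hD1 : ∀ δ ∈ Δ, (1:ℝ) ≤
        ((sInf {d : ℕ | ∃ i : ι, δ.2 ⊆ vars i ∧ d = degRel (R i) δ.1 δ.2} : ℕ) : ℝ) := by
      intro δ hδ
      have hne : {d : ℕ | ∃ i : ι, δ.2 ⊆ vars i ∧ d = degRel (R i) δ.1 δ.2}.Nonempty := by
        obtain ⟨i, hi⟩ := hguard δ hδ
        exact ⟨degRel (R i) δ.1 δ.2, i, hi, rfl⟩
      obtain ⟨i, hYi, hDi⟩ := Nat.sInf_mem hne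
      rw [hDi]
      obtain ⟨t₁, ht₁⟩ := hT
      exact_mod_cast one_le_degRel (R i) δ.1 δ.2 ⟨proj (vars i) t₁, hGT.1 t₁ ht₁ i⟩
    have hRHS : ∑ δ ∈ Δ, w δ * (marginalEntropy T (fun _ => (T.card:ℝ)⁻¹) (δ.1 ∪ δ.2)
          - marginalEntropy T (fun _ => (T.card:ℝ)⁻¹) δ.1)
        ≤ ∑ δ ∈ Δ, w δ * Real.log
            ((sInf {d : ℕ | ∃ i : ι, δ.2 ⊆ vars i ∧ d = degRel (R i) δ.1 δ.2} : ℕ) : ℝ) := by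
      apply Finset.sum_le_sum
      intro δ hδ
      apply mul_le_mul_of_nonneg_left _ (hw δ hδ)
      have hne : {d : ℕ | ∃ i : ι, δ.2 ⊆ vars i ∧ d = degRel (R i) δ.1 δ.2}.Nonempty := by
        obtain ⟨i, hi⟩ := hguard δ hδ
        exact ⟨degRel (R i) δ.1 δ.2, i, hi, rfl⟩
      obtain ⟨i, hYi, hDi⟩ := Nat.sInf_mem hne
      rw [hDi]
      exact cond_entropy_le T hT δ.1 δ.2 (R i) (vars i) hYi (fun t ht => hGT.1 t ht i)
    have hlogB : ∑ δ ∈ Δ, w δ * Real.log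
          ((sInf {d : ℕ | ∃ i : ι, δ.2 ⊆ vars i ∧ d = degRel (R i) δ.1 δ.2} : ℕ) : ℝ)
        = Real.log B := by
      rw [hB, Real.log_prod (fun δ hδ =>
        (Real.rpow_pos_of_pos (lt_of_lt_of_le one_pos (hD1 δ hδ)) _).ne')]
      exact Finset.sum_congr rfl fun δ hδ => by
        rw [Real.log_rpow (lt_of_lt_of_le one_pos (hD1 δ hδ))]
    have hBpos : 0 < B := Finset.prod_pos fun δ hδ =>
      Real.rpow_pos_of_pos (lt_of_lt_of_le one_pos (hD1 δ hδ)) _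
    have hlog : Real.log T.card ≤ Real.log B := by
      rw [← hLHS, ← hlogB]
      exact le_trans hin hRHS
    calc (T.card:ℝ) = Real.exp (Real.log T.card) := (Real.exp_log hN).symm
      _ ≤ Real.exp (Real.log B) := Real.exp_le_exp.mpr hlog
      _ = B := Real.exp_log hBpos
  -- pick a Good set of maximum cardinality
  set Scard : Set ℕ := {n | ∃ T : Finset (V → Dom), Good T ∧ T.card = n} with hScard
  have h0 : 0 ∈ Scard := ⟨∅, ⟨fun t ht => absurd ht (Finset.notMem_empty t),
    fun o => by rw [Finset.coe_empty]; exact Set.injOn_empty _⟩, Finset.card_empty⟩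
  have hbdd : BddAbove Scard := ⟨Nat.floor B, by
    rintro n ⟨T, hGT, rfl⟩
    exact Nat.le_floor (key T hGT)⟩
  obtain ⟨T, hGT, hTcard⟩ := Nat.sSup_mem ⟨0, h0⟩ hbdd
  refine ⟨fun o => T.image (proj (Zvars o)), ?_, ?_⟩
  · intro t htJ
    by_contra hcon
    push_neg at hcon
    have htT : t ∉ T := fun h => hcon o₀ (Finset.mem_image_of_mem _ h)
    have hGood' : Good (insert t T) := by
      constructor
      · intro s hs i
        rcases Finset.mem_insert.mp hs with rfl | hsT
        · exact htJ i
        · exact hGT.1 s hsT i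
      · intro o a ha b hb hab
        rw [Finset.coe_insert] at ha hb
        rcases Set.mem_insert_iff.mp ha with rfl | haT <;>
          rcases Set.mem_insert_iff.mp hb with rfl | hbT
        · rfl
        · exact absurd (hab ▸ Finset.mem_image_of_mem (proj (Zvars o))
            (Finset.mem_coe.mp hbT)) (hcon o)
        · exact absurd (hab ▸ Finset.mem_image_of_mem (proj (Zvars o))
            (Finset.mem_coe.mp haT)) (fun hh => hcon o hh)
        · exact hGT.2 o haT hbT hab
    have hmem : (insert t T).card ∈ Scard := ⟨_, hGood', rfl⟩
    have hle := le_csSup hbdd hmem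
    rw [Finset.card_insert_of_notMem htT, hTcard] at hle
    omega
  · calc ∑ o : ιout, ((T.image (proj (Zvars o))).card : ℝ)
        ≤ ∑ _o : ιout, (T.card : ℝ) :=
          Finset.sum_le_sum fun o _ => by exact_mod_cast Finset.card_image_le
      _ = (Fintype.card ιout : ℝ) * T.card := by
          rw [Finset.sum_const, Finset.card_univ, nsmul_eq_mul]
      _ ≤ (Fintype.card ιout : ℝ) * B :=
          mul_le_mul_of_nonneg_left (key T hGT) (Nat.cast_nonneg _)
end
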